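/- arXiv:1903.08754 — 15 statements merged into one kernel-verified Lean document; each statement's English description precedes it below -/
import Mathlib

section
/- For subsets C and D of a metric space X with centroid x_ctr, and ρ ≥ 0, the truncated Hausdorff distance dl_ρ(epi ι_C, epi ι_D) between the epigraphs of the indicator functions of C and D equals dl_ρ(C, D). -/
open Set Filter Metric ENNReal Pointwise Classical

noncomputable section

/-- Excess of `A` over `B`: `sup_{x ∈ A} dist(x,B)`, valued in `ℝ≥0∞`
(so it is `0` when `A = ∅` and `∞` when `A ≠ ∅`, `B = ∅`). -/
def exs {X : Type*} [PseudoEMetricSpace X] (A B : Set X) : ℝ≥0∞ :=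
  ⨆ x ∈ A, EMetric.infEdist x B

/-- Truncated Hausdorff distance with centroid `c` and radius `ρ`. -/
def dl {X : Type*} [PseudoEMetricSpace X] (c : X) (ρ : ℝ≥0∞) (A B : Set X) : ℝ≥0∞ :=
  max (exs (A ∩ EMetric.closedBall c ρ) B) (exs (B ∩ EMetric.closedBall c ρ) A)

/-- Epigraph of an extended-real-valued function. -/
def epi {X : Type*} (f : X → EReal) : Set (X × ℝ) :=
  {p | f p.1 ≤ (p.2 : EReal)}

/-- Absolute difference of extended reals, valued in `ℝ≥0∞`. -/
def eAbsDiff (a b : EReal) : ℝ≥0∞ :=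
  sInf {ε : ℝ≥0∞ | a ≤ b + (ε : EReal) ∧ b ≤ a + (ε : EReal)}

lemma epi_ind {X : Type*} [MetricSpace X] (C : Set X) :
    epi (fun x => if x ∈ C then (0:EReal) else ⊤) = C ×ˢ Ici (0:ℝ) := by
  ext ⟨x, α⟩
  by_cases h : x ∈ C <;> simp [epi, h, EReal.coe_nonneg]

lemma ball_prod {X : Type*} [MetricSpace X] (c : X) (ρ : ℝ≥0∞) :
    EMetric.closedBall ((c, (0:ℝ)) : X × ℝ) ρ
      = EMetric.closedBall c ρ ×ˢ EMetric.closedBall (0:ℝ) ρ := by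
  ext ⟨x, α⟩
  simp [EMetric.closedBall, Metric.mem_closedEBall, Prod.edist_eq, max_le_iff]

lemma exs_prod {X : Type*} [MetricSpace X] (c : X) (ρ : ℝ≥0∞) (C D : Set X) :
    exs ((C ×ˢ Ici (0:ℝ)) ∩ (EMetric.closedBall c ρ ×ˢ EMetric.closedBall (0:ℝ) ρ))
      (D ×ˢ Ici (0:ℝ)) = exs (C ∩ EMetric.closedBall c ρ) D := by
  apply le_antisymm
  · refine iSup₂_le fun p hp => ?_
    obtain ⟨⟨hC, hα⟩, hball, -⟩ := hp
    have h1 : EMetric.infEdist p (D ×ˢ Ici (0:ℝ)) ≤ EMetric.infEdist p.1 D := by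
      rw [EMetric.infEdist]
      refine le_iInf₂ fun y hy => ?_
      have : (y, p.2) ∈ D ×ˢ Ici (0:ℝ) := ⟨hy, hα⟩
      calc EMetric.infEdist p (D ×ˢ Ici (0:ℝ)) ≤ edist p (y, p.2) :=
            EMetric.infEdist_le_edist_of_mem this
        _ = edist p.1 y := by simp [Prod.edist_eq]
    refine h1.trans ?_
    exact le_iSup₂ (f := fun x (_ : x ∈ C ∩ EMetric.closedBall c ρ) => EMetric.infEdist x D)
      p.1 ⟨hC, hball⟩
  · refine iSup₂_le fun x hx => ?_
    have hmem : ((x, (0:ℝ)) : X × ℝ) ∈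
        (C ×ˢ Ici (0:ℝ)) ∩ (EMetric.closedBall c ρ ×ˢ EMetric.closedBall (0:ℝ) ρ) :=
      ⟨⟨hx.1, le_refl (0:ℝ)⟩, hx.2, by simp [EMetric.closedBall, Metric.mem_closedEBall]⟩
    have h1 : EMetric.infEdist x D ≤ EMetric.infEdist ((x,(0:ℝ)) : X × ℝ) (D ×ˢ Ici (0:ℝ)) := by
      rw [EMetric.infEdist]
      refine le_iInf₂ fun q hq => ?_
      calc EMetric.infEdist x D ≤ edist x q.1 := EMetric.infEdist_le_edist_of_mem hq.1
        _ ≤ edist ((x,(0:ℝ)) : X × ℝ) q := by simp [Prod.edist_eq]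
    exact h1.trans (le_iSup₂ (f := fun p (_ : p ∈ _) => EMetric.infEdist p (D ×ˢ Ici (0:ℝ)))
      _ hmem)

/-- for the indicator functions of `C` and `D`, the truncated Hausdorff
distance between their epigraphs equals that between `C` and `D`. -/
theorem stmt0 {X : Type*} [MetricSpace X] (c : X) (C D : Set X) (ρ : ℝ) (hρ : 0 ≤ ρ) :
    dl (c, (0 : ℝ)) (ENNReal.ofReal ρ)
      (epi (fun x => if x ∈ C then (0 : EReal) else ⊤))
      (epi (fun x => if x ∈ D then (0 : EReal) else ⊤))
    = dl c (ENNReal.ofReal ρ) C D := by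
  rw [epi_ind, epi_ind, dl, dl, ball_prod, exs_prod, exs_prod]
end
end

section
/- For i = 1,…,m, let C_i, D_i be subsets of metric spaces (X_i, d_{X_i}) with centroids x_i^ctr, and equip X = X_1 × ⋯ × X_m with the sup product metric and centroid (x_1^ctr,…,x_m^ctr). Then for all ρ ≥ 0, dl_ρ(C_1×⋯×C_m, D_1×⋯×D_m) ≤ max_{i} dl_ρ(C_i, D_i); moreover, if (C_1×⋯×C_m) ∩ B_X(ρ) and (D_1×⋯×D_m) ∩ B_X(ρ) are nonempty, then equality holds. -/
open Set Filter Metric ENNReal Pointwise Classical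

noncomputable section

lemma pi_closedBall {ι : Type*} [Fintype ι] {X : ι → Type*} [∀ i, MetricSpace (X i)]
    (c : ∀ i, X i) (ρ : ℝ≥0∞) :
    EMetric.closedBall c ρ = univ.pi fun i => EMetric.closedBall (c i) ρ := by
  ext x
  simp [EMetric.closedBall, EMetric.mem_closedBall, edist_pi_def, Finset.sup_le_iff, Set.mem_univ_pi]

lemma pi_inter_ball {ι : Type*} [Fintype ι] {X : ι → Type*} [∀ i, MetricSpace (X i)]
    (c : ∀ i, X i) (ρ : ℝ≥0∞) (C : ∀ i, Set (X i)) :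
    univ.pi C ∩ EMetric.closedBall c ρ
      = univ.pi fun i => C i ∩ EMetric.closedBall (c i) ρ := by
  rw [pi_closedBall, ← Set.pi_inter_distrib]

lemma infEdist_pi {ι : Type*} [Fintype ι] [Nonempty ι] {X : ι → Type*}
    [∀ i, MetricSpace (X i)] (x : ∀ i, X i) (D : ∀ i, Set (X i)) :
    EMetric.infEdist x (univ.pi D) = ⨆ i, EMetric.infEdist (x i) (D i) := by
  apply le_antisymm
  · apply ENNReal.le_of_forall_pos_le_add
    intro ε hε hlt
    have hεpos : (0 : ℝ≥0∞) < ε := ENNReal.coe_pos.2 hε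
    have hi : ∀ i, ∃ y ∈ D i, edist (x i) y < EMetric.infEdist (x i) (D i) + ε := by
      intro i
      have h1 : EMetric.infEdist (x i) (D i) < ⊤ :=
        lt_of_le_of_lt (le_iSup (fun i => EMetric.infEdist (x i) (D i)) i) hlt
      exact EMetric.infEdist_lt_iff.1 (ENNReal.lt_add_right h1.ne hεpos.ne')
    choose y hy hylt using hi
    have hmem : y ∈ univ.pi D := fun i _ => hy i
    calc EMetric.infEdist x (univ.pi D) ≤ edist x y := EMetric.infEdist_le_edist_of_mem hmem
    _ ≤ (⨆ i, EMetric.infEdist (x i) (D i)) + ε := by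
        rw [edist_pi_def]
        apply Finset.sup_le
        intro i _
        exact le_trans (hylt i).le (add_le_add_left (le_iSup _ i) (ε : ℝ≥0∞))
  · apply iSup_le
    intro i
    rw [EMetric.infEdist, EMetric.infEdist, Metric.le_infEDist]
    intro y hy
    exact le_trans (EMetric.infEdist_le_edist_of_mem (hy i (mem_univ i)))
      (edist_le_pi_edist x y i)

lemma exs_pi_le {ι : Type*} [Fintype ι] [Nonempty ι] {X : ι → Type*}
    [∀ i, MetricSpace (X i)] (A D : ∀ i, Set (X i)) :
    exs (univ.pi A) (univ.pi D) ≤ ⨆ i, exs (A i) (D i) := by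
  apply iSup₂_le
  intro x hx
  rw [infEdist_pi]
  apply iSup_le
  intro i
  calc EMetric.infEdist (x i) (D i) ≤ exs (A i) (D i) :=
        le_iSup₂ (f := fun a (_ : a ∈ A i) => EMetric.infEdist a (D i)) (x i) (hx i (mem_univ i))
  _ ≤ ⨆ j, exs (A j) (D j) := le_iSup (fun j => exs (A j) (D j)) i

lemma le_exs_pi {ι : Type*} [Fintype ι] [Nonempty ι] {X : ι → Type*}
    [∀ i, MetricSpace (X i)] (A D : ∀ i, Set (X i)) (i : ι)
    (hA : (univ.pi A).Nonempty) :
    exs (A i) (D i) ≤ exs (univ.pi A) (univ.pi D) := by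
  obtain ⟨z, hz⟩ := hA
  apply iSup₂_le
  intro a ha
  set x : ∀ j, X j := Function.update z i a with hxdef
  have hx : x ∈ univ.pi A := by
    intro j _
    by_cases h : j = i
    · subst h; simpa [hxdef] using ha
    · simpa [hxdef, Function.update_of_ne h] using hz j (mem_univ j)
  have h1 : EMetric.infEdist a (D i) ≤ EMetric.infEdist x (univ.pi D) := by
    rw [infEdist_pi]
    have : x i = a := Function.update_self i a z
    calc EMetric.infEdist a (D i) = EMetric.infEdist (x i) (D i) := by rw [this]
    _ ≤ ⨆ j, EMetric.infEdist (x j) (D j) := le_iSup (fun j => EMetric.infEdist (x j) (D j)) i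
  exact le_trans h1 (le_iSup₂ (f := fun b (_ : b ∈ univ.pi A) =>
    EMetric.infEdist b (univ.pi D)) x hx)

/-- truncated Hausdorff distance between product sets with the sup product
metric: inequality in general, equality when both truncated products are nonempty. -/
theorem stmt2 {ι : Type*} [Fintype ι] [Nonempty ι] {X : ι → Type*}
    [∀ i, MetricSpace (X i)] (c : ∀ i, X i) (C D : ∀ i, Set (X i)) (ρ : ℝ) (hρ : 0 ≤ ρ) :
    dl c (ENNReal.ofReal ρ) (univ.pi C) (univ.pi D)
        ≤ ⨆ i, dl (c i) (ENNReal.ofReal ρ) (C i) (D i)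
    ∧ ((univ.pi C ∩ EMetric.closedBall c (ENNReal.ofReal ρ)).Nonempty →
       (univ.pi D ∩ EMetric.closedBall c (ENNReal.ofReal ρ)).Nonempty →
       dl c (ENNReal.ofReal ρ) (univ.pi C) (univ.pi D)
         = ⨆ i, dl (c i) (ENNReal.ofReal ρ) (C i) (D i)) := by
  set r := ENNReal.ofReal ρ
  have hC' : univ.pi C ∩ EMetric.closedBall c r
      = univ.pi fun i => C i ∩ EMetric.closedBall (c i) r := pi_inter_ball c r C
  have hD' : univ.pi D ∩ EMetric.closedBall c r
      = univ.pi fun i => D i ∩ EMetric.closedBall (c i) r := pi_inter_ball c r D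
  have hle : dl c r (univ.pi C) (univ.pi D) ≤ ⨆ i, dl (c i) r (C i) (D i) := by
    unfold dl
    apply max_le
    · rw [hC']
      refine le_trans (exs_pi_le _ _) (iSup_mono fun i => ?_)
      exact le_max_left _ _
    · rw [hD']
      refine le_trans (exs_pi_le _ _) (iSup_mono fun i => ?_)
      exact le_max_right _ _
  refine ⟨hle, fun hCne hDne => le_antisymm hle ?_⟩
  rw [hC'] at hCne
  rw [hD'] at hDne
  apply iSup_le
  intro i
  unfold dl
  apply max_le
  · refine le_trans ?_ (le_max_left _ _)
    rw [hC']
    exact le_exs_pi _ _ i hCne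
  · refine le_trans ?_ (le_max_right _ _)
    rw [hD']
    exact le_exs_pi _ _ i hDne
end
end

section
/- For subsets C and D of a normed linear space X and ρ ∈ [0,∞] such that C, D ⊂ B_X(ρ) (the closed ball of radius ρ centered at 0), the convex hulls satisfy dl_ρ(conv C, conv D) ≤ dl_ρ(C, D). -/
open Set Filter Metric ENNReal Pointwise Classical

noncomputable section

lemma exs_mono_left {X : Type*} [PseudoEMetricSpace X] {A A' B : Set X} (h : A' ⊆ A) :
    exs A' B ≤ exs A B :=
  iSup₂_le fun x hx => le_iSup₂ (f := fun x _ => EMetric.infEdist x B) x (h hx)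

lemma exs_convexHull_le {X : Type*} [NormedAddCommGroup X] [NormedSpace ℝ X]
    (C D : Set X) : exs (convexHull ℝ C) (convexHull ℝ D) ≤ exs C D := by
  rcases eq_or_ne C ∅ with hCe | hCe
  · simp [exs, hCe]
  rcases eq_or_ne D ∅ with hDe | hDe
  · obtain ⟨x, hx⟩ := nonempty_iff_ne_empty.2 hCe
    have : (⊤ : ℝ≥0∞) ≤ exs C D := by
      refine le_iSup₂_of_le x hx ?_
      simp [hDe, EMetric.infEdist_empty]
      exact Metric.infEDist_empty
    exact le_top.trans this
  set r := exs C D with hr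
  rcases eq_or_ne r ⊤ with hrt | hrt
  · rw [hrt]; exact le_top
  have key : convexHull ℝ C ⊆ Metric.cthickening r.toReal (convexHull ℝ D) := by
    refine convexHull_min (fun x hx => ?_) ((convex_convexHull ℝ D).cthickening _)
    rw [Metric.mem_cthickening_iff, ENNReal.ofReal_toReal hrt]
    refine le_trans (EMetric.infEdist_anti (subset_convexHull ℝ D)) ?_
    exact le_iSup₂ (f := fun x _ => EMetric.infEdist x D) x hx
  refine iSup₂_le fun x hx => ?_
  have := key hx
  rw [Metric.mem_cthickening_iff, ENNReal.ofReal_toReal hrt] at this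
  exact this

/-- taking convex hulls is nonexpansive for the truncated Hausdorff
distance when both sets lie in the centered ball of radius `ρ` (possibly `ρ = ∞`). -/
theorem stmt3 {X : Type*} [NormedAddCommGroup X] [NormedSpace ℝ X]
    (C D : Set X) (ρ : ℝ≥0∞)
    (hC : C ⊆ EMetric.closedBall (0 : X) ρ) (hD : D ⊆ EMetric.closedBall (0 : X) ρ) :
    dl (0 : X) ρ (convexHull ℝ C) (convexHull ℝ D) ≤ dl (0 : X) ρ C D := by
  unfold dl
  rw [Set.inter_eq_self_of_subset_left hC, Set.inter_eq_self_of_subset_left hD]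
  exact max_le_max
    ((exs_mono_left Set.inter_subset_left).trans (exs_convexHull_le C D))
    ((exs_mono_left Set.inter_subset_left).trans (exs_convexHull_le D C))
end
end

section
/- For a normed linear space X, nonempty sets C_1,…,C_m, D_1,…,D_m ⊂ X with C_i, D_i ⊂ B_X(ρ) for i = 2,…,m (but C_1, D_1 possibly unbounded), dl_ρ(C_1+⋯+C_m, D_1+⋯+D_m) ≤ dl_{mρ}(C_1,D_1) + Σ_{i=2}^m dl_ρ(C_i, D_i). -/
open Set Filter Metric ENNReal Pointwise Classical

noncomputable section

lemma infEdist_add_le' {X : Type*} [SeminormedAddCommGroup X] (a b : X) (A B : Set X) :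
    EMetric.infEdist (a + b) (A + B) ≤ EMetric.infEdist a A + EMetric.infEdist b B := by
  refine ENNReal.le_of_forall_pos_le_add fun ε hε hfin => ?_
  have hA : EMetric.infEdist a A < ⊤ := (le_add_right le_rfl).trans_lt hfin
  have hB : EMetric.infEdist b B < ⊤ := (le_add_left le_rfl).trans_lt hfin
  have hε2 : ((ε : ℝ≥0∞) / 2) ≠ 0 := by
    simp [ENNReal.div_eq_zero_iff, hε.ne']
  obtain ⟨p, hpA, hp⟩ := EMetric.infEdist_lt_iff.mp
    (ENNReal.lt_add_right hA.ne hε2)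
  obtain ⟨q, hqB, hq⟩ := EMetric.infEdist_lt_iff.mp
    (ENNReal.lt_add_right hB.ne hε2)
  calc EMetric.infEdist (a + b) (A + B)
      ≤ edist (a + b) (p + q) := EMetric.infEdist_le_edist_of_mem (Set.add_mem_add hpA hqB)
    _ ≤ edist a p + edist b q := edist_add_add_le a b p q
    _ ≤ (EMetric.infEdist a A + ε / 2) + (EMetric.infEdist b B + ε / 2) :=
        add_le_add hp.le hq.le
    _ = EMetric.infEdist a A + EMetric.infEdist b B + ε := by
        rw [add_add_add_comm, ENNReal.add_halves]

lemma infEdist_sum_le {X : Type*} [SeminormedAddCommGroup X] {ι : Type*} (s : Finset ι)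
    (c : ι → X) (C : ι → Set X) :
    EMetric.infEdist (∑ i ∈ s, c i) (∑ i ∈ s, C i) ≤ ∑ i ∈ s, EMetric.infEdist (c i) (C i) := by
  induction s using Finset.cons_induction with
  | empty =>
      simpa [EMetric.infEdist] using le_of_eq (EMetric.infEdist_zero_of_mem (by simp : (0:X) ∈ (0 : Set X)))
  | cons a s ha ih =>
      simp only [Finset.sum_cons]
      exact (infEdist_add_le' _ _ _ _).trans (add_le_add le_rfl ih)

/-- Minkowski sums where one summand (`C 0`, `D 0`) may be unbounded:
its contribution is measured at radius `m·ρ` instead of `ρ`. -/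
theorem stmt5 {X : Type*} [NormedAddCommGroup X] {m : ℕ} [NeZero m]
    (C D : Fin m → Set X) (ρ : ℝ) (hρ : 0 ≤ ρ)
    (hCne : ∀ i, (C i).Nonempty) (hDne : ∀ i, (D i).Nonempty)
    (hC : ∀ i, i ≠ 0 → C i ⊆ Metric.closedBall (0 : X) ρ)
    (hD : ∀ i, i ≠ 0 → D i ⊆ Metric.closedBall (0 : X) ρ) :
    dl (0 : X) (ENNReal.ofReal ρ) (∑ i, C i) (∑ i, D i)
      ≤ dl (0 : X) (ENNReal.ofReal (m * ρ)) (C 0) (D 0)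
        + ∑ i ∈ Finset.univ.erase 0, dl (0 : X) (ENNReal.ofReal ρ) (C i) (D i) := by
  have hmρ : 0 ≤ (m : ℝ) * ρ := by positivity
  -- key one-sided lemma
  have key : ∀ (C D : Fin m → Set X), (∀ i, i ≠ 0 → C i ⊆ Metric.closedBall (0 : X) ρ) →
      exs ((∑ i, C i) ∩ EMetric.closedBall 0 (ENNReal.ofReal ρ)) (∑ i, D i)
        ≤ exs (C 0 ∩ EMetric.closedBall 0 (ENNReal.ofReal (m * ρ))) (D 0)
          + ∑ i ∈ Finset.univ.erase 0,
              exs (C i ∩ EMetric.closedBall 0 (ENNReal.ofReal ρ)) (D i) := by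
    intro C D hC
    rw [exs]
    refine iSup₂_le fun x hx => ?_
    obtain ⟨hxS, hxball⟩ := hx
    rw [EMetric.closedBall, Metric.emetric_closedBall hρ, Metric.mem_closedBall, dist_zero_right] at hxball
    obtain ⟨c, hc, hsum⟩ := Set.mem_finset_sum Finset.univ C x |>.mp hxS
    have hcball : ∀ i : Fin m, i ≠ 0 → ‖c i‖ ≤ ρ := by
      intro i hi
      have := hC i hi (hc (Finset.mem_univ i))
      rwa [Metric.mem_closedBall, dist_zero_right] at this
    have hc0 : ‖c 0‖ ≤ (m : ℝ) * ρ := by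
      have h1 : c 0 = x - ∑ i ∈ Finset.univ.erase 0, c i := by
        rw [← hsum, ← Finset.add_sum_erase _ c (Finset.mem_univ 0)]
        abel
      have h2 : ‖∑ i ∈ Finset.univ.erase 0, c i‖ ≤ (m - 1 : ℝ) * ρ := by
        calc ‖∑ i ∈ Finset.univ.erase 0, c i‖ ≤ ∑ i ∈ Finset.univ.erase 0, ‖c i‖ :=
              norm_sum_le _ _
          _ ≤ ∑ i ∈ Finset.univ.erase 0, ρ :=
              Finset.sum_le_sum fun i hi => hcball i (Finset.ne_of_mem_erase hi)
          _ = (m - 1 : ℝ) * ρ := by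
              rw [Finset.sum_const, Finset.card_erase_of_mem (Finset.mem_univ 0),
                Finset.card_univ, Fintype.card_fin, nsmul_eq_mul,
                Nat.cast_sub (NeZero.one_le), Nat.cast_one]
      calc ‖c 0‖ = ‖x - ∑ i ∈ Finset.univ.erase 0, c i‖ := by rw [h1]
        _ ≤ ‖x‖ + ‖∑ i ∈ Finset.univ.erase 0, c i‖ := norm_sub_le _ _
        _ ≤ ρ + (m - 1 : ℝ) * ρ := add_le_add hxball h2
        _ = (m : ℝ) * ρ := by ring
    have hxsum : x = ∑ i : Fin m, c i := hsum.symm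
    calc EMetric.infEdist x (∑ i, D i)
        ≤ ∑ i : Fin m, EMetric.infEdist (c i) (D i) := by
          rw [hxsum]; exact infEdist_sum_le _ _ _
      _ = EMetric.infEdist (c 0) (D 0)
            + ∑ i ∈ Finset.univ.erase 0, EMetric.infEdist (c i) (D i) :=
          (Finset.add_sum_erase _ _ (Finset.mem_univ 0)).symm
      _ ≤ exs (C 0 ∩ EMetric.closedBall 0 (ENNReal.ofReal (m * ρ))) (D 0)
            + ∑ i ∈ Finset.univ.erase 0,
                exs (C i ∩ EMetric.closedBall 0 (ENNReal.ofReal ρ)) (D i) := by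
          refine add_le_add ?_ (Finset.sum_le_sum fun i hi => ?_)
          · refine le_iSup₂ (f := fun x (_ : x ∈ _) => EMetric.infEdist x (D 0)) (c 0) ?_
            refine ⟨hc (Finset.mem_univ 0), ?_⟩
            rw [EMetric.closedBall, Metric.emetric_closedBall hmρ, Metric.mem_closedBall, dist_zero_right]
            exact_mod_cast hc0
          · refine le_iSup₂ (f := fun x (_ : x ∈ _) => EMetric.infEdist x (D i)) (c i) ?_
            refine ⟨hc (Finset.mem_univ i), ?_⟩
            rw [EMetric.closedBall, Metric.emetric_closedBall hρ, Metric.mem_closedBall, dist_zero_right]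
            exact hcball i (Finset.ne_of_mem_erase hi)
  rw [dl]
  refine max_le ?_ ?_
  · exact (key C D hC).trans (add_le_add (le_max_left _ _)
      (Finset.sum_le_sum fun i _ => le_max_left _ _))
  · exact (key D C hD).trans (add_le_add (le_max_right _ _)
      (Finset.sum_le_sum fun i _ => le_max_right _ _))
end
end

section
/- For nonempty subsets C, D of a normed linear space, nonzero scalars λ, μ ∈ ℝ, and ρ ≥ 0, dl_ρ(λC, μD) ≤ ρ̄|λ−μ| + max{|λ|,|μ|} dl_{ρ̄}(C,D), provided ρ̄ > (2ρ + max{|λ| dist(0,C), |λ| dist(0,D), |μ| dist(0,D)}) · max{|λ|⁻¹, |μ|⁻¹}. -/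
open Set Filter Metric ENNReal Pointwise Classical

noncomputable section

/-- One-sided version of stmt6. -/
lemma exs_smul_key {X : Type*} [NormedAddCommGroup X] [NormedSpace ℝ X]
    (C D : Set X) (l μ ρ ρb : ℝ) (hl : l ≠ 0) (hμ : μ ≠ 0) (hρ : 0 ≤ ρ)
    (hρb : ρ / |l| ≤ ρb) :
    exs ((l • C) ∩ EMetric.closedBall 0 (ENNReal.ofReal ρ)) (μ • D)
      ≤ ENNReal.ofReal (ρb * |l - μ|)
        + ENNReal.ofReal (max |l| |μ|)
          * exs (C ∩ EMetric.closedBall 0 (ENNReal.ofReal ρb)) D := by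
  have hlpos : (0:ℝ) < |l| := abs_pos.mpr hl
  rw [exs]
  refine iSup₂_le fun x hx => ?_
  obtain ⟨⟨c, hcC, rfl⟩, hball⟩ := hx
  -- bound on ‖c‖
  have hnorm : ‖l • c‖ ≤ ρ := by
    have := EMetric.mem_closedBall.mp hball
    rw [edist_zero_right, ← ofReal_norm] at this
    exact (ENNReal.ofReal_le_ofReal_iff hρ).mp this
  have hc : ‖c‖ ≤ ρb := by
    rw [norm_smul, Real.norm_eq_abs] at hnorm
    have : ‖c‖ ≤ ρ / |l| := (le_div_iff₀ hlpos).mpr (by linarith [hnorm])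
    linarith
  have hρb0 : 0 ≤ ρb := le_trans (norm_nonneg c) hc
  have hcmem : c ∈ C ∩ EMetric.closedBall 0 (ENNReal.ofReal ρb) := by
    refine ⟨hcC, EMetric.mem_closedBall.mpr ?_⟩
    rw [edist_zero_right, ← ofReal_norm]
    exact ENNReal.ofReal_le_ofReal hc
  calc EMetric.infEdist (l • c) (μ • D)
      ≤ EMetric.infEdist (μ • c) (μ • D) + edist (l • c) (μ • c) :=
        EMetric.infEdist_le_infEdist_add_edist
    _ ≤ ENNReal.ofReal (max |l| |μ|)
          * exs (C ∩ EMetric.closedBall 0 (ENNReal.ofReal ρb)) D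
        + ENNReal.ofReal (ρb * |l - μ|) := by
        gcongr
        · rw [show EMetric.infEdist (μ • c) (μ • D) = Metric.infEDist (μ • c) (μ • D) from rfl,
            infEDist_smul₀ hμ, ENNReal.smul_def, smul_eq_mul,
            ← enorm_eq_nnnorm, ← ofReal_norm, Real.norm_eq_abs]
          refine mul_le_mul' (ENNReal.ofReal_le_ofReal (le_max_right _ _)) ?_
          exact le_iSup₂ (f := fun x (_ : x ∈ C ∩ EMetric.closedBall 0 (ENNReal.ofReal ρb)) =>
            EMetric.infEdist x D) c hcmem
        · rw [edist_dist, dist_eq_norm, ← sub_smul, norm_smul, Real.norm_eq_abs]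
          refine ENNReal.ofReal_le_ofReal ?_
          rw [mul_comm ρb]
          exact mul_le_mul_of_nonneg_left hc (abs_nonneg _)
    _ = ENNReal.ofReal (ρb * |l - μ|)
        + ENNReal.ofReal (max |l| |μ|)
          * exs (C ∩ EMetric.closedBall 0 (ENNReal.ofReal ρb)) D := add_comm _ _

/-- scalar multiples of sets. -/
theorem stmt6 {X : Type*} [NormedAddCommGroup X] [NormedSpace ℝ X]
    (C D : Set X) (hCne : C.Nonempty) (hDne : D.Nonempty)
    (l μ : ℝ) (hl : l ≠ 0) (hμ : μ ≠ 0) (ρ ρb : ℝ) (hρ : 0 ≤ ρ)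
    (hρb : ρb > (2 * ρ + max (|l| * Metric.infDist (0 : X) C)
        (max (|l| * Metric.infDist (0 : X) D) (|μ| * Metric.infDist (0 : X) D)))
        * max |l|⁻¹ |μ|⁻¹) :
    dl (0 : X) (ENNReal.ofReal ρ) (l • C) (μ • D)
      ≤ ENNReal.ofReal (ρb * |l - μ|)
        + ENNReal.ofReal (max |l| |μ|) * dl (0 : X) (ENNReal.ofReal ρb) C D := by
  set M := max (|l| * Metric.infDist (0 : X) C)
      (max (|l| * Metric.infDist (0 : X) D) (|μ| * Metric.infDist (0 : X) D)) with hM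
  have hM0 : 0 ≤ M :=
    le_trans (mul_nonneg (abs_nonneg l) Metric.infDist_nonneg) (le_max_left _ _)
  have hmx0 : (0:ℝ) ≤ max |l|⁻¹ |μ|⁻¹ :=
    le_trans (by positivity) (le_max_left |l|⁻¹ |μ|⁻¹)
  have key : ∀ a : ℝ, a ≠ 0 → |a|⁻¹ ≤ max |l|⁻¹ |μ|⁻¹ → ρ / |a| ≤ ρb := by
    intro a ha hle
    have hapos : (0:ℝ) < |a| := abs_pos.mpr ha
    rw [div_eq_mul_inv]
    calc ρ * |a|⁻¹ ≤ ρ * max |l|⁻¹ |μ|⁻¹ := by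
          exact mul_le_mul_of_nonneg_left hle hρ
      _ ≤ (2 * ρ + M) * max |l|⁻¹ |μ|⁻¹ := by
          refine mul_le_mul_of_nonneg_right (by linarith) hmx0
      _ ≤ ρb := hρb.le
  have h1 : ρ / |l| ≤ ρb := key l hl (le_max_left _ _)
  have h2 : ρ / |μ| ≤ ρb := key μ hμ (le_max_right _ _)
  rw [dl]
  refine max_le ?_ ?_
  · refine le_trans (exs_smul_key C D l μ ρ ρb hl hμ hρ h1) ?_
    gcongr
    exact le_max_left _ _
  · have := exs_smul_key D C μ l ρ ρb hμ hl hρ h2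
    rw [abs_sub_comm μ l, max_comm |μ| |l|] at this
    refine le_trans this ?_
    gcongr
    exact le_max_right _ _
end
end

section
/- For a metric space X with centroid x_ctr, sets C_1, C_2, C_3 ⊂ X, and ρ ≥ 0, the truncated Hausdorff distance satisfies the extended triangle inequality dl_ρ(C_1, C_3) ≤ dl_{ρ̄}(C_1, C_2) + dl_{ρ̄}(C_2, C_3) whenever ρ̄ > 2ρ + max{dist(x_ctr,C_1), dist(x_ctr,C_2), dist(x_ctr,C_3)}. -/
open Set Filter Metric ENNReal Pointwise Classical

noncomputable section

open EMetric in
lemma key_stmt7 {X : Type*} [MetricSpace X] (c : X) (A M B : Set X) (ρ ρb : ℝ≥0∞)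
    (hρb : ρb ≠ ∞) (h : 2 * ρ + infEdist c M < ρb)
    (x : X) (hx : x ∈ A) (hxρ : edist c x ≤ ρ) :
    infEdist x B ≤ exs (A ∩ closedBall c ρb) M + exs (M ∩ closedBall c ρb) B := by
  rw [exs, exs]
  set a := (⨆ y ∈ A ∩ closedBall c ρb, infEdist y M) with ha
  set b := (⨆ y ∈ M ∩ closedBall c ρb, infEdist y B) with hb
  have hρ2 : ρ ≤ 2 * ρ := by rw [two_mul]; exact le_self_add
  have hρbtop : ρb < ∞ := lt_top_iff_ne_top.2 hρb
  have hρρb : ρ ≤ ρb := hρ2.trans ((le_self_add).trans h.le)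
  have hρlt : ρ < ∞ := lt_of_le_of_lt hρρb hρbtop
  have hr2 : infEdist c M < ∞ := lt_of_le_of_lt le_add_self (h.trans hρbtop)
  have hxM : infEdist x M ≤ infEdist c M + ρ := by
    calc infEdist x M ≤ infEdist c M + edist x c := infEdist_le_infEdist_add_edist
      _ ≤ infEdist c M + ρ := by rw [edist_comm]; exact add_le_add_right hxρ _
  have hxMlt : infEdist x M < ∞ :=
    lt_of_le_of_lt hxM (ENNReal.add_lt_top.2 ⟨hr2, hρlt⟩)
  have hxball : x ∈ closedBall c ρb := by
    change edist x c ≤ ρb; rw [edist_comm]; exact hxρ.trans hρρb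
  have hxa : infEdist x M ≤ a :=
    le_iSup₂ (f := fun y (_ : y ∈ A ∩ closedBall c ρb) => infEdist y M) x ⟨hx, hxball⟩
  rcases eq_or_ne (a + b) ∞ with hab | hab
  · rw [hab]; exact le_top
  apply ENNReal.le_of_forall_pos_le_add
  intro δ hδ _
  set ε : ℝ≥0∞ := min (δ : ℝ≥0∞) (ρb - (2 * ρ + infEdist c M)) with hε
  have hεpos : 0 < ε := lt_min (by exact_mod_cast hδ) (tsub_pos_iff_lt.2 h)
  have hlt : infEdist x M < infEdist x M + ε :=
    ENNReal.lt_add_right hxMlt.ne hεpos.ne'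
  obtain ⟨y, hyM, hxy⟩ := infEdist_lt_iff.1 hlt
  have hyball : y ∈ closedBall c ρb := by
    change edist y c ≤ ρb; rw [edist_comm]
    calc edist c y ≤ edist c x + edist x y := edist_triangle _ _ _
      _ ≤ ρ + (infEdist x M + ε) := add_le_add hxρ hxy.le
      _ ≤ ρ + ((infEdist c M + ρ) + ε) := add_le_add_right (add_le_add_left hxM _) _
      _ = (2 * ρ + infEdist c M) + ε := by ring
      _ ≤ (2 * ρ + infEdist c M) + (ρb - (2 * ρ + infEdist c M)) :=
          add_le_add_right (min_le_right _ _) _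
      _ = ρb := add_tsub_cancel_of_le h.le
  have hyb : infEdist y B ≤ b :=
    le_iSup₂ (f := fun z (_ : z ∈ M ∩ closedBall c ρb) => infEdist z B) y ⟨hyM, hyball⟩
  calc infEdist x B ≤ edist x y + infEdist y B := infEdist_le_edist_add_infEdist
    _ ≤ (infEdist x M + ε) + b := add_le_add hxy.le hyb
    _ ≤ (a + ε) + b := add_le_add_left (add_le_add_left hxa _) _
    _ ≤ (a + δ) + b := add_le_add_left (add_le_add_right (min_le_left _ _) _) _
    _ = a + b + δ := by ring

/-- triangle inequality in the extended sense. -/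
theorem stmt7 {X : Type*} [MetricSpace X] (c : X) (C₁ C₂ C₃ : Set X) (ρ ρb : ℝ)
    (hρ : 0 ≤ ρ)
    (hρb : ENNReal.ofReal ρb > 2 * ENNReal.ofReal ρ +
      max (EMetric.infEdist c C₁) (max (EMetric.infEdist c C₂) (EMetric.infEdist c C₃))) :
    dl c (ENNReal.ofReal ρ) C₁ C₃
      ≤ dl c (ENNReal.ofReal ρb) C₁ C₂ + dl c (ENNReal.ofReal ρb) C₂ C₃ := by
  have h2 : 2 * ENNReal.ofReal ρ + EMetric.infEdist c C₂ < ENNReal.ofReal ρb :=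
    lt_of_le_of_lt (add_le_add_right ((le_max_left _ _).trans (le_max_right _ _)) _) hρb
  have hne : ENNReal.ofReal ρb ≠ ∞ := ENNReal.ofReal_ne_top
  rw [dl, max_le_iff]
  constructor
  · apply iSup₂_le
    intro x hx
    have := key_stmt7 c C₁ C₂ C₃ (ENNReal.ofReal ρ) (ENNReal.ofReal ρb) hne h2 x hx.1
      (by rw [edist_comm]; exact EMetric.mem_closedBall.1 hx.2)
    refine this.trans (add_le_add ?_ ?_)
    · exact le_max_left _ _
    · exact le_max_left _ _
  · apply iSup₂_le
    intro x hx
    have := key_stmt7 c C₃ C₂ C₁ (ENNReal.ofReal ρ) (ENNReal.ofReal ρb) hne h2 x hx.1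
      (by rw [edist_comm]; exact EMetric.mem_closedBall.1 hx.2)
    rw [add_comm (dl c (ENNReal.ofReal ρb) C₁ C₂)]
    refine this.trans (add_le_add ?_ ?_)
    · exact le_max_right _ _
    · exact le_max_right _ _
end
end

section
/- For a metric space X, functions f, g : X → [−∞,∞], and ε, ρ ≥ 0: if inf f, inf g ∈ [−ρ, ρ−ε) and for every γ > 0 both γ-argmin f ∩ B_X(ρ) and γ-argmin g ∩ B_X(ρ) are nonempty, then |inf f − inf g| ≤ dl_ρ(epi f, epi g). -/
open Set Filter Metric ENNReal Pointwise Classical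

noncomputable section

lemma stmt8_aux {X : Type*} [MetricSpace X] (c : X) (f g : X → EReal) (ε ρ : ℝ)
    (hε : 0 ≤ ε)
    (hf1 : ((-ρ : ℝ) : EReal) ≤ ⨅ x, f x) (hf2 : ⨅ x, f x < ((ρ - ε : ℝ) : EReal))
    (hg1 : ((-ρ : ℝ) : EReal) ≤ ⨅ x, g x) (hg2 : ⨅ x, g x < ((ρ - ε : ℝ) : EReal))
    (hfargmin : ∀ γ : ℝ, 0 < γ →
      ({x | f x < ⊤ ∧ f x ≤ (⨅ x', f x') + ((γ : ℝ) : EReal)}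
        ∩ Metric.closedBall c ρ).Nonempty)
    (b' : ℝ)
    (hexs : exs (epi f ∩ EMetric.closedBall (c, (0 : ℝ)) (ENNReal.ofReal ρ)) (epi g)
      < ENNReal.ofReal b') :
    ⨅ x, g x ≤ (⨅ x, f x) + ((b' : ℝ) : EReal) := by
  have hfnt : (⨅ x, f x) ≠ ⊤ := ne_top_of_lt hf2
  have hfnb : (⨅ x, f x) ≠ ⊥ := ne_bot_of_le_ne_bot (EReal.coe_ne_bot _) hf1
  have hgnt : (⨅ x, g x) ≠ ⊤ := ne_top_of_lt hg2
  have hgnb : (⨅ x, g x) ≠ ⊥ := ne_bot_of_le_ne_bot (EReal.coe_ne_bot _) hg1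
  set m : ℝ := (⨅ x, f x).toReal with hm
  set n : ℝ := (⨅ x, g x).toReal with hn
  have hfm : (⨅ x, f x) = (m : EReal) := (EReal.coe_toReal hfnt hfnb).symm
  have hgn : (⨅ x, g x) = (n : EReal) := (EReal.coe_toReal hgnt hgnb).symm
  have hmlt : m < ρ := by
    have : (m : EReal) < ((ρ - ε : ℝ) : EReal) := hfm ▸ hf2
    have := EReal.coe_lt_coe_iff.mp this
    linarith
  have hmge : -ρ ≤ m := by
    have : ((-ρ : ℝ) : EReal) ≤ (m : EReal) := hfm ▸ hf1
    exact EReal.coe_le_coe_iff.mp this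
  -- key step
  have key : ∀ γ : ℝ, 0 < γ → m + γ ≤ ρ → n ≤ m + b' + γ := by
    intro γ hγ hγρ
    obtain ⟨x, ⟨hx1, hx2⟩, hxball⟩ := hfargmin γ hγ
    set α : ℝ := m + γ with hα
    have hαle : |α| ≤ ρ := abs_le.mpr ⟨by simp only [hα]; linarith, hγρ⟩
    have hpepi : (x, α) ∈ epi f := by
      show f x ≤ (α : EReal)
      calc f x ≤ (⨅ x', f x') + ((γ : ℝ) : EReal) := hx2
        _ = ((m + γ : ℝ) : EReal) := by rw [hfm, ← EReal.coe_add]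
    have hpball : (x, α) ∈ EMetric.closedBall (c, (0 : ℝ)) (ENNReal.ofReal ρ) := by
      change edist (x, α) (c, (0 : ℝ)) ≤ ENNReal.ofReal ρ
      rw [Prod.edist_eq]
      refine max_le ?_ ?_
      · rw [edist_dist]
        exact ENNReal.ofReal_le_ofReal (Metric.mem_closedBall.mp hxball)
      · rw [edist_dist]
        refine ENNReal.ofReal_le_ofReal ?_
        simpa [Real.dist_eq] using hαle
    have hinf : EMetric.infEdist (x, α) (epi g) < ENNReal.ofReal b' := by
      refine lt_of_le_of_lt ?_ hexs
      exact le_iSup₂ (f := fun p (_ : p ∈ epi f ∩ EMetric.closedBall (c, (0:ℝ))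
        (ENNReal.ofReal ρ)) => EMetric.infEdist p (epi g)) (x, α) ⟨hpepi, hpball⟩
    obtain ⟨q, hq, hqd⟩ := EMetric.infEdist_lt_iff.mp hinf
    obtain ⟨y, β⟩ := q
    have hβd : dist α β < b' := by
      have h2 : edist α β < ENNReal.ofReal b' := lt_of_le_of_lt (le_max_right _ _)
        ((Prod.edist_eq (x, α) (y, β)) ▸ hqd)
      rw [edist_dist] at h2
      exact (ENNReal.ofReal_lt_ofReal_iff_of_nonneg dist_nonneg).mp h2
    have hβlt : β < α + b' := by
      have := abs_lt.mp (by simpa [Real.dist_eq] using hβd)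
      linarith
    have hnβ : (n : EReal) ≤ (β : EReal) := by
      calc (n : EReal) = ⨅ x', g x' := hgn.symm
        _ ≤ g y := iInf_le _ _
        _ ≤ (β : EReal) := hq
    have := EReal.coe_le_coe_iff.mp hnβ
    linarith
  -- conclude
  have hnm : n ≤ m + b' := by
    refine le_of_forall_pos_le_add ?_
    intro δ hδ
    have hργ : 0 < ρ - m := by linarith
    set γ := min δ ((ρ - m) / 2) with hγdef
    have hγpos : 0 < γ := lt_min hδ (by linarith)
    have hγρ : m + γ ≤ ρ := by
      have : γ ≤ (ρ - m) / 2 := min_le_right _ _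
      linarith
    have := key γ hγpos hγρ
    have : n ≤ m + b' + γ := this
    have hγδ : γ ≤ δ := min_le_left _ _
    linarith
  rw [hfm, hgn, ← EReal.coe_add]
  exact EReal.coe_le_coe_iff.mpr hnm

/-- approximation of infima. -/
theorem stmt8 {X : Type*} [MetricSpace X] (c : X) (f g : X → EReal) (ε ρ : ℝ)
    (hε : 0 ≤ ε) (hρ : 0 ≤ ρ)
    (hf1 : ((-ρ : ℝ) : EReal) ≤ ⨅ x, f x) (hf2 : ⨅ x, f x < ((ρ - ε : ℝ) : EReal))
    (hg1 : ((-ρ : ℝ) : EReal) ≤ ⨅ x, g x) (hg2 : ⨅ x, g x < ((ρ - ε : ℝ) : EReal))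
    (hfargmin : ∀ γ : ℝ, 0 < γ →
      ({x | f x < ⊤ ∧ f x ≤ (⨅ x', f x') + ((γ : ℝ) : EReal)}
        ∩ Metric.closedBall c ρ).Nonempty)
    (hgargmin : ∀ γ : ℝ, 0 < γ →
      ({x | g x < ⊤ ∧ g x ≤ (⨅ x', g x') + ((γ : ℝ) : EReal)}
        ∩ Metric.closedBall c ρ).Nonempty) :
    eAbsDiff (⨅ x, f x) (⨅ x, g x)
      ≤ dl (c, (0 : ℝ)) (ENNReal.ofReal ρ) (epi f) (epi g) := by
  have hfnb : (⨅ x, f x) ≠ ⊥ := ne_bot_of_le_ne_bot (EReal.coe_ne_bot _) hf1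
  have hgnb : (⨅ x, g x) ≠ ⊥ := ne_bot_of_le_ne_bot (EReal.coe_ne_bot _) hg1
  refine le_of_forall_gt_imp_ge_of_dense ?_
  intro b hb
  refine sInf_le ?_
  by_cases hbt : b = ⊤
  · subst hbt
    constructor
    · rw [EReal.coe_ennreal_top, EReal.add_top_of_ne_bot hgnb]; exact le_top
    · rw [EReal.coe_ennreal_top, EReal.add_top_of_ne_bot hfnb]; exact le_top
  · set b' : ℝ := b.toReal with hb'
    have hbc : ((b : EReal)) = ((b' : ℝ) : EReal) := by
      rw [hb', ← EReal.toReal_coe_ennreal (x := b)]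
      exact (EReal.coe_toReal (by simp [hbt]) (by simp)).symm
    have hbo : ENNReal.ofReal b' = b := ENNReal.ofReal_toReal hbt
    have hexs1 : exs (epi f ∩ EMetric.closedBall (c, (0 : ℝ)) (ENNReal.ofReal ρ)) (epi g)
        < ENNReal.ofReal b' := hbo ▸ lt_of_le_of_lt (le_max_left _ _) hb
    have hexs2 : exs (epi g ∩ EMetric.closedBall (c, (0 : ℝ)) (ENNReal.ofReal ρ)) (epi f)
        < ENNReal.ofReal b' := hbo ▸ lt_of_le_of_lt (le_max_right _ _) hb
    constructor
    · rw [hbc]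
      exact stmt8_aux c g f ε ρ hε hg1 hg2 hf1 hf2 hgargmin b' hexs2
    · rw [hbc]
      exact stmt8_aux c f g ε ρ hε hf1 hf2 hg1 hg2 hfargmin b' hexs1

end
end

section
/- For a metric space X, functions f, g : X → [−∞,∞], and ε, ρ ≥ 0: if inf f, inf g ∈ [−ρ, ρ−ε), γ-argmin f ∩ B_X(ρ) and γ-argmin g ∩ B_X(ρ) are nonempty for all γ > 0, and δ > ε + 2·dl_ρ(epi f, epi g), then exs(ε-argmin g ∩ B_X(ρ); δ-argmin f) ≤ dl_ρ(epi f, epi g). -/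
open Set Filter Metric ENNReal Pointwise Classical

noncomputable section

/-- approximation of near-minimizers. -/
theorem stmt9 {X : Type*} [MetricSpace X] (c : X) (f g : X → EReal) (ε ρ δ : ℝ)
    (hε : 0 ≤ ε) (hρ : 0 ≤ ρ)
    (hf1 : ((-ρ : ℝ) : EReal) ≤ ⨅ x, f x) (hf2 : ⨅ x, f x < ((ρ - ε : ℝ) : EReal))
    (hg1 : ((-ρ : ℝ) : EReal) ≤ ⨅ x, g x) (hg2 : ⨅ x, g x < ((ρ - ε : ℝ) : EReal))
    (hfargmin : ∀ γ : ℝ, 0 < γ →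
      ({x | f x < ⊤ ∧ f x ≤ (⨅ x', f x') + ((γ : ℝ) : EReal)}
        ∩ Metric.closedBall c ρ).Nonempty)
    (hgargmin : ∀ γ : ℝ, 0 < γ →
      ({x | g x < ⊤ ∧ g x ≤ (⨅ x', g x') + ((γ : ℝ) : EReal)}
        ∩ Metric.closedBall c ρ).Nonempty)
    (hδ : ENNReal.ofReal δ >
      ENNReal.ofReal ε + 2 * dl (c, (0 : ℝ)) (ENNReal.ofReal ρ) (epi f) (epi g)) :
    exs ({x | g x < ⊤ ∧ g x ≤ (⨅ x', g x') + ((ε : ℝ) : EReal)} ∩ Metric.closedBall c ρ)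
        {x | f x < ⊤ ∧ f x ≤ (⨅ x', f x') + ((δ : ℝ) : EReal)}
      ≤ dl (c, (0 : ℝ)) (ENNReal.ofReal ρ) (epi f) (epi g) := by
  set D := dl (c, (0:ℝ)) (ENNReal.ofReal ρ) (epi f) (epi g) with hDdef
  have hδtop : ENNReal.ofReal δ ≠ ⊤ := ENNReal.ofReal_ne_top
  have hDlt : D < ⊤ := by
    by_contra h
    push_neg at h
    rw [top_le_iff.mp h] at hδ
    simp [ENNReal.mul_top] at hδ
  set t := D.toReal with htdef
  have hDt : D = ENNReal.ofReal t := (ENNReal.ofReal_toReal hDlt.ne).symm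
  have ht0 : 0 ≤ t := ENNReal.toReal_nonneg
  have hδ' : ε + 2 * t < δ := by
    have h1 : ENNReal.ofReal (ε + 2 * t) ≤ ENNReal.ofReal ε + 2 * D := by
      rw [ENNReal.ofReal_add hε (by positivity), ENNReal.ofReal_mul (by norm_num), hDt]
      simp
    have h2 : ENNReal.ofReal (ε + 2 * t) < ENNReal.ofReal δ := lt_of_le_of_lt h1 hδ
    exact ((ENNReal.ofReal_lt_ofReal_iff_of_nonneg (by positivity)).mp h2)
  -- finiteness of infima
  have hfbot : (⨅ x, f x) ≠ ⊥ := by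
    intro h; rw [h] at hf1; exact (EReal.coe_ne_bot _) (le_bot_iff.mp hf1)
  have hftop : (⨅ x, f x) ≠ ⊤ := ne_top_of_lt hf2
  have hgbot : (⨅ x, g x) ≠ ⊥ := by
    intro h; rw [h] at hg1; exact (EReal.coe_ne_bot _) (le_bot_iff.mp hg1)
  have hgtop : (⨅ x, g x) ≠ ⊤ := ne_top_of_lt hg2
  set F := (⨅ x, f x).toReal with hFdef
  set G := (⨅ x, g x).toReal with hGdef
  have hF : ((F : ℝ) : EReal) = ⨅ x, f x := EReal.coe_toReal hftop hfbot
  have hG : ((G : ℝ) : EReal) = ⨅ x, g x := EReal.coe_toReal hgtop hgbot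
  have hF1 : -ρ ≤ F := EReal.coe_le_coe_iff.mp (by rw [hF]; exact hf1)
  have hF2 : F < ρ - ε := EReal.coe_lt_coe_iff.mp (by rw [hF]; exact hf2)
  have hG1 : -ρ ≤ G := EReal.coe_le_coe_iff.mp (by rw [hG]; exact hg1)
  have hG2 : G < ρ - ε := EReal.coe_lt_coe_iff.mp (by rw [hG]; exact hg2)
  -- Claim: G ≤ F + t
  have hGF : G ≤ F + t := by
    refine le_of_forall_pos_le_add fun η hη => ?_
    set γ := min (η / 2) (ρ - ε - F) with hγdef
    have hγ0 : 0 < γ := lt_min (by linarith) (by linarith)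
    have hγ1 : γ ≤ η / 2 := min_le_left _ _
    have hγ2 : γ ≤ ρ - ε - F := min_le_right _ _
    obtain ⟨z, ⟨hz1, hz2⟩, hz3⟩ := hfargmin γ hγ0
    have hzlow : ((-ρ : ℝ) : EReal) ≤ f z := le_trans hf1 (iInf_le _ z)
    have hzbot : f z ≠ ⊥ := by
      intro h; rw [h] at hzlow; exact (EReal.coe_ne_bot _) (le_bot_iff.mp hzlow)
    set b := (f z).toReal with hbdef
    have hbz : ((b : ℝ) : EReal) = f z := EReal.coe_toReal hz1.ne hzbot
    have hb1 : -ρ ≤ b := EReal.coe_le_coe_iff.mp (by rw [hbz]; exact hzlow)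
    have hb2 : b ≤ F + γ := by
      refine EReal.coe_le_coe_iff.mp ?_
      rw [hbz, EReal.coe_add, hF]
      exact hz2
    have hbρ : |b| ≤ ρ := abs_le.2 ⟨hb1, by linarith⟩
    have hmem : (z, b) ∈ epi f ∩ EMetric.closedBall (c, (0:ℝ)) (ENNReal.ofReal ρ) := by
      refine ⟨hbz.ge, ?_⟩
      change edist (z, b) (c, (0:ℝ)) ≤ ENNReal.ofReal ρ
      rw [Prod.edist_eq]
      refine max_le ?_ ?_
      · rw [edist_dist]
        exact ENNReal.ofReal_le_ofReal (Metric.mem_closedBall.mp hz3)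
      · rw [edist_dist]
        exact ENNReal.ofReal_le_ofReal (by simpa [Real.dist_eq] using hbρ)
    have hinf : EMetric.infEdist (z, b) (epi g) ≤ D := by
      refine le_trans ?_ (le_max_left _ _)
      exact le_iSup₂ (f := fun p (_ : p ∈ epi f ∩ EMetric.closedBall (c, (0:ℝ)) (ENNReal.ofReal ρ)) => EMetric.infEdist p (epi g)) (z, b) hmem
    have hlt : EMetric.infEdist (z, b) (epi g) < ENNReal.ofReal (t + η / 2) := by
      refine lt_of_le_of_lt hinf ?_
      rw [hDt]
      exact (ENNReal.ofReal_lt_ofReal_iff (by linarith)).2 (by linarith)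
    obtain ⟨p, hp, hpe⟩ := EMetric.infEdist_lt_iff.mp hlt
    have hd := edist_lt_ofReal.mp hpe
    have hd2 : dist b p.2 < t + η / 2 := by
      refine lt_of_le_of_lt ?_ hd
      rw [Prod.dist_eq]
      exact le_max_right _ _
    have hGp : G ≤ p.2 := by
      refine EReal.coe_le_coe_iff.mp ?_
      rw [hG]
      exact le_trans (iInf_le _ p.1) hp
    have hp2 : p.2 ≤ b + (t + η / 2) := by
      rw [Real.dist_eq, abs_sub_lt_iff] at hd2
      linarith [hd2.2]
    linarith
  -- Main argument
  simp only [exs]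
  refine iSup₂_le fun x hx => ?_
  obtain ⟨⟨hx1, hx2⟩, hx3⟩ := hx
  have hxlow : ((-ρ : ℝ) : EReal) ≤ g x := le_trans hg1 (iInf_le _ x)
  have hxbot : g x ≠ ⊥ := by
    intro h; rw [h] at hxlow; exact (EReal.coe_ne_bot _) (le_bot_iff.mp hxlow)
  set a := (g x).toReal with hadef
  have hax : ((a : ℝ) : EReal) = g x := EReal.coe_toReal hx1.ne hxbot
  have ha1 : -ρ ≤ a := EReal.coe_le_coe_iff.mp (by rw [hax]; exact hxlow)
  have ha2 : a ≤ G + ε := by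
    refine EReal.coe_le_coe_iff.mp ?_
    rw [hax, EReal.coe_add, hG]
    exact hx2
  have haρ : |a| ≤ ρ := abs_le.2 ⟨ha1, by linarith⟩
  have hmem : (x, a) ∈ epi g ∩ EMetric.closedBall (c, (0:ℝ)) (ENNReal.ofReal ρ) := by
    refine ⟨hax.ge, ?_⟩
    change edist (x, a) (c, (0:ℝ)) ≤ ENNReal.ofReal ρ
    rw [Prod.edist_eq]
    refine max_le ?_ ?_
    · rw [edist_dist]
      exact ENNReal.ofReal_le_ofReal (Metric.mem_closedBall.mp hx3)
    · rw [edist_dist]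
      exact ENNReal.ofReal_le_ofReal (by simpa [Real.dist_eq] using haρ)
  have hinf : EMetric.infEdist (x, a) (epi f) ≤ D := by
    refine le_trans ?_ (le_max_right _ _)
    exact le_iSup₂ (f := fun p (_ : p ∈ epi g ∩ EMetric.closedBall (c, (0:ℝ)) (ENNReal.ofReal ρ)) => EMetric.infEdist p (epi f)) (x, a) hmem
  refine ENNReal.le_of_forall_pos_le_add fun η hη _ => ?_
  set r := min (η : ℝ) (δ - ε - 2 * t) with hrdef
  have hη0 : (0 : ℝ) < η := hη
  have hr0 : 0 < r := lt_min hη0 (by linarith)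
  have hr1 : r ≤ (η : ℝ) := min_le_left _ _
  have hr2 : r ≤ δ - ε - 2 * t := min_le_right _ _
  have hlt : EMetric.infEdist (x, a) (epi f) < ENNReal.ofReal (t + r) := by
    refine lt_of_le_of_lt hinf ?_
    rw [hDt]
    exact (ENNReal.ofReal_lt_ofReal_iff (by linarith)).2 (by linarith)
  obtain ⟨p, hp, hpe⟩ := EMetric.infEdist_lt_iff.mp hlt
  have hd := edist_lt_ofReal.mp hpe
  have hd1 : dist x p.1 < t + r := by
    refine lt_of_le_of_lt ?_ hd
    rw [Prod.dist_eq]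
    exact le_max_left _ _
  have hd2 : dist a p.2 < t + r := by
    refine lt_of_le_of_lt ?_ hd
    rw [Prod.dist_eq]
    exact le_max_right _ _
  have hp2 : p.2 ≤ a + (t + r) := by
    rw [Real.dist_eq, abs_sub_lt_iff] at hd2
    linarith [hd2.2]
  have hfp : f p.1 ≤ ((p.2 : ℝ) : EReal) := hp
  have hmemf : p.1 ∈ {x | f x < ⊤ ∧ f x ≤ (⨅ x', f x') + ((δ : ℝ) : EReal)} := by
    refine ⟨lt_of_le_of_lt hfp (EReal.coe_lt_top _), ?_⟩
    refine le_trans hfp ?_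
    rw [← hF, ← EReal.coe_add]
    exact EReal.coe_le_coe_iff.2 (by linarith)
  calc EMetric.infEdist x {x | f x < ⊤ ∧ f x ≤ (⨅ x', f x') + ((δ : ℝ) : EReal)}
      ≤ edist x p.1 := EMetric.infEdist_le_edist_of_mem hmemf
    _ ≤ ENNReal.ofReal (t + (η : ℝ)) := by
        rw [edist_dist]
        exact ENNReal.ofReal_le_ofReal (by linarith)
    _ ≤ D + η := by
        rw [hDt, ENNReal.ofReal_add ht0 η.coe_nonneg, ENNReal.ofReal_coe_nnreal]
end
end

section
/- For a metric space X, functions f, g : X → [−∞,∞], ρ ≥ 0, δ ∈ [−ρ,ρ], and ε > δ + exs(epi g ∩ B_{X×ℝ}(ρ); epi f): the level sets satisfy exs(lev_δ g ∩ B_X(ρ); lev_ε f) ≤ exs(epi g ∩ B_{X×ℝ}(ρ); epi f) ≤ dl_ρ(epi f, epi g). -/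
open Set Filter Metric ENNReal Pointwise Classical

noncomputable section

/-- approximation of level sets. -/
theorem stmt10 {X : Type*} [MetricSpace X] (c : X) (f g : X → EReal) (ρ δ ε : ℝ)
    (hρ : 0 ≤ ρ) (hδ : -ρ ≤ δ) (hδ' : δ ≤ ρ)
    (hε : ENNReal.ofReal (ε - δ) >
      exs (epi g ∩ EMetric.closedBall (c, (0 : ℝ)) (ENNReal.ofReal ρ)) (epi f)) :
    exs ({x | g x ≤ ((δ : ℝ) : EReal)} ∩ Metric.closedBall c ρ) {x | f x ≤ ((ε : ℝ) : EReal)}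
      ≤ exs (epi g ∩ EMetric.closedBall (c, (0 : ℝ)) (ENNReal.ofReal ρ)) (epi f)
    ∧ exs (epi g ∩ EMetric.closedBall (c, (0 : ℝ)) (ENNReal.ofReal ρ)) (epi f)
      ≤ dl (c, (0 : ℝ)) (ENNReal.ofReal ρ) (epi f) (epi g) := by
  set r := exs (epi g ∩ EMetric.closedBall (c, (0 : ℝ)) (ENNReal.ofReal ρ)) (epi f) with hr
  constructor
  · -- first inequality
    refine iSup₂_le fun x hx => ?_
    obtain ⟨hgx, hxball⟩ := hx
    -- (x, δ) belongs to epi g ∩ ball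
    have hmem : (x, δ) ∈ epi g ∩ EMetric.closedBall (c, (0 : ℝ)) (ENNReal.ofReal ρ) := by
      constructor
      · exact hgx
      · change edist (x, δ) (c, (0 : ℝ)) ≤ ENNReal.ofReal ρ
        rw [Prod.edist_eq]
        refine max_le ?_ ?_
        · rw [edist_dist]
          exact ENNReal.ofReal_le_ofReal hxball
        · rw [edist_dist]
          refine ENNReal.ofReal_le_ofReal ?_
          rw [Real.dist_eq, sub_zero]
          exact abs_le.mpr ⟨hδ, hδ'⟩
    have hle : EMetric.infEdist (x, δ) (epi f) ≤ r := by
      rw [hr]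
      exact le_iSup₂_of_le (x, δ) hmem le_rfl
    have hεδ : (0 : ℝ) < ε - δ := by
      by_contra h
      push_neg at h
      rw [ENNReal.ofReal_eq_zero.mpr h] at hε
      exact (not_lt.mpr zero_le) hε
    -- show infEdist x (lev ε f) ≤ r
    by_contra hcon
    push_neg at hcon
    obtain ⟨t, ht1, ht2⟩ := exists_between (lt_min hε hcon)
    have ht3 : t < ENNReal.ofReal (ε - δ) := lt_of_lt_of_le ht2 (min_le_left _ _)
    have ht4 : t < EMetric.infEdist x {x | f x ≤ ((ε : ℝ) : EReal)} :=
      lt_of_lt_of_le ht2 (min_le_right _ _)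
    have : EMetric.infEdist (x, δ) (epi f) < t := lt_of_le_of_lt hle ht1
    obtain ⟨p, hp, hpd⟩ := EMetric.infEdist_lt_iff.mp this
    obtain ⟨y, β⟩ := p
    rw [Prod.edist_eq, max_lt_iff] at hpd
    obtain ⟨hd1, hd2⟩ := hpd
    -- β < ε
    have hβ : β ≤ ε := by
      have h1 : edist δ β < ENNReal.ofReal (ε - δ) := lt_trans hd2 ht3
      rw [edist_dist] at h1
      have h2 := (ENNReal.ofReal_lt_ofReal_iff hεδ).mp h1
      rw [Real.dist_eq] at h2
      have h3 := (abs_lt.mp h2).1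
      linarith
    have hy : y ∈ {x | f x ≤ ((ε : ℝ) : EReal)} := by
      have hp' : f y ≤ (β : EReal) := hp
      refine le_trans hp' ?_
      exact_mod_cast EReal.coe_le_coe_iff.mpr hβ
    have := EMetric.infEdist_le_edist_of_mem (x := x) hy
    exact lt_irrefl _ (lt_trans ht4 (lt_of_le_of_lt this hd1))
  · exact le_max_right _ _
end
end

section
/- For a metric space X, functions f, g : X → [−∞,∞] with nonempty epigraphs, and ρ ≥ 0, the truncated Hausdorff distance dl_ρ(epi f, epi g) equals the infimum over all η ≥ 0 satisfying the Kenmochi conditions: inf_{B(x,η)} g ≤ max{f(x), −ρ} + η for all x ∈ lev_ρ f ∩ B_X(ρ), and inf_{B(x,η)} f ≤ max{g(x), −ρ} + η for all x ∈ lev_ρ g ∩ B_X(ρ). -/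
open Set Filter Metric ENNReal Pointwise Classical

noncomputable section

lemma ereal_coe_enn {η : ℝ≥0∞} (hη : η ≠ ⊤) :
    (η : EReal) = ((η.toReal : ℝ) : EReal) := by
  rw [← EReal.toReal_coe_ennreal]
  exact (EReal.coe_toReal (by simp [hη]) (EReal.coe_ennreal_ne_bot η)).symm

lemma sideA {X : Type*} [MetricSpace X] (c : X) (f g : X → EReal) (ρ : ℝ) (hρ : 0 ≤ ρ)
    (η : ℝ≥0∞)
    (h : ∀ x, f x ≤ ((ρ : ℝ) : EReal) → x ∈ Metric.closedBall c ρ →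
      ⨅ y ∈ EMetric.closedBall x η, g y ≤ max (f x) ((-ρ : ℝ) : EReal) + (η : EReal)) :
    exs (epi f ∩ EMetric.closedBall (c, (0 : ℝ)) (ENNReal.ofReal ρ)) (epi g) ≤ η := by
  refine iSup₂_le fun p hp => ?_
  obtain ⟨hpf, hpb⟩ := hp
  obtain ⟨x, α⟩ := p
  rw [EMetric.closedBall, EMetric.mem_closedBall, Prod.edist_eq, max_le_iff] at hpb
  obtain ⟨hxc, hα⟩ := hpb
  have hxc' : x ∈ Metric.closedBall c ρ := by
    rw [Metric.mem_closedBall, ← ENNReal.ofReal_le_ofReal_iff hρ, ← edist_dist]; exact hxc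
  have hαρ : |α| ≤ ρ := by
    rw [edist_dist, ENNReal.ofReal_le_ofReal_iff hρ, Real.dist_eq, sub_zero] at hα
    exact hα
  have hfx : f x ≤ ((ρ : ℝ) : EReal) :=
    le_trans hpf (by exact_mod_cast (abs_le.1 hαρ).2)
  have key : ⨅ y ∈ EMetric.closedBall x η, g y ≤ ((α : ℝ) : EReal) + (η : EReal) := by
    refine le_trans (h x hfx hxc') (add_le_add_left ?_ _)
    exact max_le hpf (by exact_mod_cast (abs_le.1 hαρ).1)
  refine ENNReal.le_of_forall_pos_le_add fun ε hε hηtop => ?_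
  set t := η.toReal with ht
  have ht0 : 0 ≤ t := ENNReal.toReal_nonneg
  have hηt : (η : EReal) = ((t : ℝ) : EReal) := ereal_coe_enn hηtop.ne
  have hlt : ⨅ y ∈ EMetric.closedBall x η, g y < ((α + t + ε : ℝ) : EReal) := by
    refine lt_of_le_of_lt key ?_
    rw [hηt, ← EReal.coe_add, EReal.coe_lt_coe_iff]
    have : (0 : ℝ) < ε := hε
    linarith
  simp only [iInf_lt_iff] at hlt
  obtain ⟨y, hy, hgy⟩ := hlt
  have hq : ((y, (α + t + ε : ℝ)) : X × ℝ) ∈ epi g := le_of_lt hgy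
  refine le_trans (EMetric.infEdist_le_edist_of_mem hq) ?_
  rw [Prod.edist_eq, max_le_iff]
  dsimp only
  constructor
  · rw [EMetric.closedBall, EMetric.mem_closedBall] at hy
    rw [edist_comm]
    exact le_trans hy (le_add_right le_rfl)
  · rw [edist_dist, Real.dist_eq]
    have : |α - (α + t + (ε : ℝ))| = t + (ε : ℝ) := by
      rw [abs_sub_comm, show α + t + (ε : ℝ) - α = t + (ε : ℝ) by ring,
        abs_of_nonneg (add_nonneg ht0 ε.coe_nonneg)]
    rw [this, ENNReal.ofReal_add ht0 ε.coe_nonneg, ENNReal.ofReal_toReal hηtop.ne,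
      ENNReal.ofReal_coe_nnreal]

lemma sideB {X : Type*} [MetricSpace X] (c : X) (f g : X → EReal) (ρ : ℝ) (hρ : 0 ≤ ρ)
    (η : ℝ≥0∞)
    (h : exs (epi f ∩ EMetric.closedBall (c, (0 : ℝ)) (ENNReal.ofReal ρ)) (epi g) < η) :
    ∀ x, f x ≤ ((ρ : ℝ) : EReal) → x ∈ Metric.closedBall c ρ →
      ⨅ y ∈ EMetric.closedBall x η, g y ≤ max (f x) ((-ρ : ℝ) : EReal) + (η : EReal) := by
  intro x hx hxc
  set m : EReal := max (f x) ((-ρ : ℝ) : EReal) with hm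
  have hmbot : m ≠ ⊥ := fun hb => by
    have : ((-ρ : ℝ) : EReal) ≤ m := le_max_right _ _
    rw [hb] at this
    exact (EReal.coe_ne_bot _) (le_bot_iff.1 this)
  by_cases hηtop : η = ⊤
  · rw [hηtop, EReal.coe_ennreal_top, EReal.add_top_of_ne_bot hmbot]
    exact le_top
  have hmtop : m ≠ ⊤ := by
    have : m ≤ ((ρ : ℝ) : EReal) := max_le hx (by exact_mod_cast neg_le_self hρ)
    exact fun ht => (EReal.coe_ne_top ρ) (top_le_iff.1 (ht ▸ this))
  set a : ℝ := m.toReal with ha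
  have hcoe : ((a : ℝ) : EReal) = m := EReal.coe_toReal hmtop hmbot
  have haρ : |a| ≤ ρ := by
    rw [abs_le]
    constructor
    · have : ((-ρ : ℝ) : EReal) ≤ ((a : ℝ) : EReal) := hcoe ▸ le_max_right _ _
      exact_mod_cast this
    · have : ((a : ℝ) : EReal) ≤ ((ρ : ℝ) : EReal) :=
        hcoe ▸ max_le hx (by exact_mod_cast neg_le_self hρ)
      exact_mod_cast this
  have hp : ((x, a) : X × ℝ) ∈ epi f ∩ EMetric.closedBall (c, (0 : ℝ)) (ENNReal.ofReal ρ) := by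
    constructor
    · show f x ≤ ((a : ℝ) : EReal)
      rw [hcoe]
      exact le_max_left _ _
    · rw [EMetric.closedBall, EMetric.mem_closedBall, Prod.edist_eq, max_le_iff]
      constructor
      · rw [edist_dist]
        exact ENNReal.ofReal_le_ofReal hxc
      · rw [edist_dist, Real.dist_eq, sub_zero]
        exact ENNReal.ofReal_le_ofReal haρ
  have hlt : EMetric.infEdist ((x, a) : X × ℝ) (epi g) < η := by
    refine lt_of_le_of_lt ?_ h
    exact le_iSup₂ (f := fun p (_ : p ∈ epi f ∩ EMetric.closedBall (c, (0 : ℝ))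
      (ENNReal.ofReal ρ)) => EMetric.infEdist p (epi g)) _ hp
  obtain ⟨q, hq, hpq⟩ := EMetric.infEdist_lt_iff.mp hlt
  obtain ⟨y, β⟩ := q
  rw [Prod.edist_eq, max_lt_iff] at hpq
  obtain ⟨h1, h2⟩ := hpq
  have hy : y ∈ EMetric.closedBall x η := by
    rw [EMetric.closedBall, EMetric.mem_closedBall, edist_comm]; exact h1.le
  rw [edist_dist] at h2
  have hβ : dist a β < η.toReal := (ENNReal.ofReal_lt_iff_lt_toReal dist_nonneg hηtop).mp h2
  have hβ' : β ≤ a + η.toReal := by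
    have := abs_sub_abs_le_abs_sub β a
    have h3 : β - a ≤ |β - a| := le_abs_self _
    rw [abs_sub_comm, ← Real.dist_eq] at h3
    linarith
  refine le_trans (iInf₂_le y hy) ?_
  refine le_trans hq ?_
  calc ((β : ℝ) : EReal) ≤ ((a + η.toReal : ℝ) : EReal) := by exact_mod_cast hβ'
    _ = m + (η : EReal) := by
        rw [EReal.coe_add, hcoe, ereal_coe_enn hηtop]

/-- Kenmochi conditions. -/
theorem stmt11 {X : Type*} [MetricSpace X] (c : X) (f g : X → EReal)
    (hf : (epi f).Nonempty) (hg : (epi g).Nonempty) (ρ : ℝ) (hρ : 0 ≤ ρ) :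
    dl (c, (0 : ℝ)) (ENNReal.ofReal ρ) (epi f) (epi g) =
      sInf {η : ℝ≥0∞ |
        (∀ x, f x ≤ ((ρ : ℝ) : EReal) → x ∈ Metric.closedBall c ρ →
          ⨅ y ∈ EMetric.closedBall x η, g y ≤ max (f x) ((-ρ : ℝ) : EReal) + (η : EReal)) ∧
        (∀ x, g x ≤ ((ρ : ℝ) : EReal) → x ∈ Metric.closedBall c ρ →
          ⨅ y ∈ EMetric.closedBall x η, f y ≤ max (g x) ((-ρ : ℝ) : EReal) + (η : EReal))} := by
  apply le_antisymm
  · refine le_sInf fun η hη => ?_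
    obtain ⟨h1, h2⟩ := hη
    exact max_le (sideA c f g ρ hρ η h1) (sideA c g f ρ hρ η h2)
  · refine le_of_forall_gt_imp_ge_of_dense fun η hη => ?_
    refine sInf_le ⟨?_, ?_⟩
    · exact sideB c f g ρ hρ η (lt_of_le_of_lt (le_max_left _ _) hη)
    · exact sideB c g f ρ hρ η (lt_of_le_of_lt (le_max_right _ _) hη)
end
end

section
/- Let X be a metric space, f, g : X → [−∞,∞] with nonempty epigraphs, both α-Hölder continuous with common modulus κ : ℝ₊ → ℝ₊ and exponent α ∈ (0,∞) on centered balls, and let C ⊂ X be nonempty, ρ ≥ 0, A_ρ = (lev_ρ f ∪ lev_ρ g) ∩ B_X(ρ), and ρ̂ > ρ + exs(A_ρ; C). Then dl_ρ(epi f, epi g) ≤ max{exs(A_ρ; C), κ(ρ̂)·[exs(A_ρ; C)]^α + sup_C |f − g|}. -/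
open Set Filter Metric ENNReal Pointwise Classical

noncomputable section

lemma eAbsDiff_comm (a b : EReal) : eAbsDiff a b = eAbsDiff b a := by
  unfold eAbsDiff; congr 1; ext ε; exact and_comm

lemma le_add_of_eAbsDiff_le {a b : EReal} {m m' : ℝ≥0∞} (h : eAbsDiff a b ≤ m)
    (hm : m < m') : b ≤ a + (m' : EReal) := by
  obtain ⟨ε, hε, hεm⟩ := sInf_lt_iff.mp (lt_of_le_of_lt h hm)
  exact hε.2.trans (add_le_add_right (EReal.coe_ennreal_le_coe_ennreal_iff.mpr hεm.le) a)

lemma ennreal_coe_ereal_toReal {M : ℝ≥0∞} (hM : M ≠ ⊤) :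
    (M : EReal) = ((M.toReal : ℝ) : EReal) := by
  conv_lhs => rw [← ENNReal.ofReal_toReal hM]
  rw [EReal.coe_ennreal_ofReal, max_eq_left ENNReal.toReal_nonneg]

lemma half {X : Type*} [MetricSpace X] (c : X) (f g : X → EReal)
    (κ : ℝ → ℝ) (hκ : ∀ r, 0 ≤ κ r) (α : ℝ) (hα : 0 < α)
    (hfH : ∀ r : ℝ, 0 ≤ r → ∀ x ∈ Metric.closedBall c r, ∀ x' ∈ Metric.closedBall c r,
        eAbsDiff (f x) (f x') ≤ ENNReal.ofReal (κ r * dist x x' ^ α))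
    (C : Set X) (ρ ρh : ℝ) (hρ : 0 ≤ ρ) (A : Set X)
    (hA : ∀ x, f x ≤ ((ρ : ℝ) : EReal) → x ∈ Metric.closedBall c ρ → x ∈ A)
    (hρh : ENNReal.ofReal ρ + exs A C < ENNReal.ofReal ρh)
    (S : ℝ≥0∞) (hS : ∀ y ∈ C, eAbsDiff (f y) (g y) ≤ S) :
    exs (epi f ∩ EMetric.closedBall (c, (0:ℝ)) (ENNReal.ofReal ρ)) (epi g)
      ≤ max (exs A C) (ENNReal.ofReal (κ ρh) * (exs A C) ^ α + S) := by
  set e := exs A C with he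
  have heT : e ≠ ⊤ := by
    intro h
    rw [h] at hρh
    simp at hρh
  set E := e.toReal with hE
  have hE0 : 0 ≤ E := ENNReal.toReal_nonneg
  have hEe : ENNReal.ofReal E = e := ENNReal.ofReal_toReal heT
  -- ρ + E < ρh
  have hlt : ρ + E < ρh := by
    have h1 : ENNReal.ofReal (ρ + E) < ENNReal.ofReal ρh := by
      rwa [ENNReal.ofReal_add hρ hE0, hEe]
    exact (ENNReal.ofReal_lt_ofReal_iff_of_nonneg (by positivity)).mp h1
  have hρh0 : 0 ≤ ρh := le_trans (by positivity) hlt.le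
  refine iSup₂_le fun p hp => ?_
  obtain ⟨hpf, hpball⟩ := hp
  obtain ⟨x, t⟩ := p
  have hfx : f x ≤ (t : EReal) := hpf
  have hball := EMetric.mem_closedBall.mp hpball
  rw [Prod.edist_eq, max_le_iff] at hball
  have hxc : dist x c ≤ ρ := by
    have := hball.1; rw [edist_dist] at this
    exact (ENNReal.ofReal_le_ofReal_iff hρ).mp this
  have htρ : |t| ≤ ρ := by
    have := hball.2; rw [edist_dist] at this
    have := (ENNReal.ofReal_le_ofReal_iff hρ).mp this
    simpa [Real.dist_eq] using this
  have hxA : x ∈ A := hA x (hfx.trans (by exact_mod_cast (abs_le.mp htρ).2)) hxc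
  have hinf : EMetric.infEdist x C ≤ e :=
    le_iSup₂ (f := fun x _ => EMetric.infEdist x C) x hxA
  refine ENNReal.le_of_forall_pos_le_add fun δ hδ hfin => ?_
  have hST : S ≠ ⊤ := by
    intro h
    rw [h] at hfin
    simp at hfin
  set e4 : ℝ := (δ : ℝ) / 4 with he4
  have he40 : 0 < e4 := by positivity
  -- choose ε0
  have hcont : ContinuousAt (fun u : ℝ => κ ρh * u ^ α) E :=
    continuousAt_const.mul (Real.continuousAt_rpow_const E α (Or.inr hα.le))
  obtain ⟨η, hη0, hη⟩ := Metric.continuousAt_iff.mp hcont e4 he40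
  set ε0 : ℝ := min (min (η / 2) e4) (ρh - (ρ + E)) with hε0def
  have hε00 : 0 < ε0 := by
    apply lt_min (lt_min (by positivity) he40)
    linarith
  have hε0η : ε0 < η := lt_of_le_of_lt (le_trans (min_le_left _ _) (min_le_left _ _)) (by linarith)
  have hε0e4 : ε0 ≤ e4 := le_trans (min_le_left _ _) (min_le_right _ _)
  have hε0ρh : ρ + E + ε0 ≤ ρh := by
    have := min_le_right (min (η / 2) e4) (ρh - (ρ + E))
    linarith [hε0def ▸ this]
  have hκε : κ ρh * (E + ε0) ^ α ≤ κ ρh * E ^ α + e4 := by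
    have h1 : dist (E + ε0) E < η := by simp [Real.dist_eq]; rw [abs_of_pos hε00]; exact hε0η
    have := hη h1
    rw [Real.dist_eq] at this
    have := (abs_lt.mp this).2
    linarith
  -- pick y ∈ C
  have hinf' : EMetric.infEdist x C < ENNReal.ofReal (E + ε0) := by
    calc EMetric.infEdist x C ≤ e := hinf
    _ = ENNReal.ofReal E := hEe.symm
    _ < ENNReal.ofReal (E + ε0) := by
        apply ENNReal.ofReal_lt_ofReal_iff (by positivity) |>.mpr
        linarith
  obtain ⟨y, hyC, hxy⟩ := EMetric.infEdist_lt_iff.mp hinf'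
  have hdxy : dist x y ≤ E + ε0 := (edist_lt_ofReal.mp hxy).le
  -- memberships in ball ρh
  have hxρh : x ∈ Metric.closedBall c ρh := by
    rw [Metric.mem_closedBall]; linarith
  have hyρh : y ∈ Metric.closedBall c ρh := by
    rw [Metric.mem_closedBall]
    calc dist y c ≤ dist y x + dist x c := dist_triangle y x c
    _ ≤ (E + ε0) + ρ := by rw [dist_comm]; linarith
    _ ≤ ρh := by linarith
  -- Hölder
  have hH := hfH ρh hρh0 x hxρh y hyρh
  set m1 : ℝ≥0∞ := ENNReal.ofReal (κ ρh * dist x y ^ α) with hm1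
  have hfy : f y ≤ f x + ((m1 + ENNReal.ofReal e4 : ℝ≥0∞) : EReal) :=
    le_add_of_eAbsDiff_le hH
      (ENNReal.lt_add_right ENNReal.ofReal_ne_top (by simp [ENNReal.ofReal_eq_zero]; linarith))
  have hgy : g y ≤ f y + ((S + ENNReal.ofReal e4 : ℝ≥0∞) : EReal) :=
    le_add_of_eAbsDiff_le (hS y hyC)
      (ENNReal.lt_add_right hST (by simp [ENNReal.ofReal_eq_zero]; linarith))
  set M : ℝ≥0∞ := m1 + ENNReal.ofReal e4 + (S + ENNReal.ofReal e4) with hM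
  have hMT : M ≠ ⊤ :=
    ENNReal.add_ne_top.mpr ⟨ENNReal.add_ne_top.mpr ⟨hm1 ▸ ENNReal.ofReal_ne_top,
      ENNReal.ofReal_ne_top⟩, ENNReal.add_ne_top.mpr ⟨hST, ENNReal.ofReal_ne_top⟩⟩
  have hgyM : g y ≤ ((t + M.toReal : ℝ) : EReal) := by
    calc g y ≤ (f x + ((m1 + ENNReal.ofReal e4 : ℝ≥0∞) : EReal)) + ((S + ENNReal.ofReal e4 : ℝ≥0∞) : EReal) := 
          le_trans hgy (add_le_add_left hfy _)
    _ = f x + (M : EReal) := by rw [add_assoc, ← EReal.coe_ennreal_add]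
    _ ≤ (t : EReal) + (M : EReal) := add_le_add_left hfx _
    _ = ((t + M.toReal : ℝ) : EReal) := by
        rw [ennreal_coe_ereal_toReal hMT, ← EReal.coe_add]
  set r : ℝ := M.toReal with hr
  have hmem : (y, t + r) ∈ epi g := hgyM
  -- bound M
  have hMbound : M ≤ ENNReal.ofReal (κ ρh) * e ^ α + S + ENNReal.ofReal (3 * e4) := by
    have hm1b : m1 ≤ ENNReal.ofReal (κ ρh * E ^ α) + ENNReal.ofReal e4 := by
      rw [← ENNReal.ofReal_add (mul_nonneg (hκ ρh) (Real.rpow_nonneg hE0 α)) he40.le]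
      apply ENNReal.ofReal_le_ofReal
      calc κ ρh * dist x y ^ α ≤ κ ρh * (E + ε0) ^ α := by
            apply mul_le_mul_of_nonneg_left _ (hκ ρh)
            exact Real.rpow_le_rpow dist_nonneg hdxy hα.le
      _ ≤ κ ρh * E ^ α + e4 := hκε
    have hprod : ENNReal.ofReal (κ ρh * E ^ α) = ENNReal.ofReal (κ ρh) * e ^ α := by
      rw [ENNReal.ofReal_mul (hκ ρh), ← hEe, ENNReal.ofReal_rpow_of_nonneg hE0 hα.le]
    calc M ≤ (ENNReal.ofReal (κ ρh * E ^ α) + ENNReal.ofReal e4) + ENNReal.ofReal e4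
              + (S + ENNReal.ofReal e4) := by
          exact add_le_add (add_le_add_left hm1b _) le_rfl
    _ = ENNReal.ofReal (κ ρh) * e ^ α + S
          + (ENNReal.ofReal e4 + ENNReal.ofReal e4 + ENNReal.ofReal e4) := by
          rw [hprod]; ring
    _ ≤ _ := by
          apply add_le_add_right
          rw [← ENNReal.ofReal_add he40.le he40.le, ← ENNReal.ofReal_add (by positivity) he40.le]
          apply ENNReal.ofReal_le_ofReal; ring_nf; rfl
  have h3e4 : ENNReal.ofReal (3 * e4) ≤ (δ : ℝ≥0∞) := by
    rw [← ENNReal.ofReal_coe_nnreal]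
    apply ENNReal.ofReal_le_ofReal
    rw [he4]; linarith
  -- final
  calc EMetric.infEdist (x, t) (epi g) ≤ edist (x, t) (y, t + r) :=
        EMetric.infEdist_le_edist_of_mem hmem
  _ = max (edist x y) (edist t (t + r)) := Prod.edist_eq _ _
  _ ≤ max (e + δ) (ENNReal.ofReal (κ ρh) * e ^ α + S + δ) := by
      apply max_le_max
      · calc edist x y ≤ ENNReal.ofReal (E + ε0) := hxy.le
        _ = ENNReal.ofReal E + ENNReal.ofReal ε0 := ENNReal.ofReal_add hE0 hε00.le
        _ ≤ e + δ := by
            rw [hEe]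
            apply add_le_add_right
            rw [← ENNReal.ofReal_coe_nnreal]
            apply ENNReal.ofReal_le_ofReal
            rw [he4] at hε0e4; linarith
      · have hedist : edist t (t + r) = M := by
          rw [edist_dist, Real.dist_eq]
          have : |t - (t + r)| = r := by
            rw [abs_sub_comm]
            simp [hr, abs_of_nonneg ENNReal.toReal_nonneg]
          rw [this, hr, ENNReal.ofReal_toReal hMT]
        rw [hedist]
        calc M ≤ ENNReal.ofReal (κ ρh) * e ^ α + S + ENNReal.ofReal (3 * e4) := hMbound
        _ ≤ _ := add_le_add_right h3e4 _
  _ = max e (ENNReal.ofReal (κ ρh) * e ^ α + S) + δ := max_add_add_right _ _ _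

/-- estimate from the sup-norm over a subset `C`, for α-Hölder
continuous functions. -/
theorem stmt13 {X : Type*} [MetricSpace X] (c : X) (f g : X → EReal)
    (hf : (epi f).Nonempty) (hg : (epi g).Nonempty)
    (κ : ℝ → ℝ) (hκ : ∀ r, 0 ≤ κ r) (α : ℝ) (hα : 0 < α)
    (hfH : ∀ r : ℝ, 0 ≤ r → ∀ x ∈ Metric.closedBall c r, ∀ x' ∈ Metric.closedBall c r,
        eAbsDiff (f x) (f x') ≤ ENNReal.ofReal (κ r * dist x x' ^ α))
    (hgH : ∀ r : ℝ, 0 ≤ r → ∀ x ∈ Metric.closedBall c r, ∀ x' ∈ Metric.closedBall c r,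
        eAbsDiff (g x) (g x') ≤ ENNReal.ofReal (κ r * dist x x' ^ α))
    (C : Set X) (hC : C.Nonempty) (ρ ρh : ℝ) (hρ : 0 ≤ ρ)
    (A : Set X)
    (hA : A = ({x | f x ≤ ((ρ : ℝ) : EReal)} ∪ {x | g x ≤ ((ρ : ℝ) : EReal)})
        ∩ Metric.closedBall c ρ)
    (hρh : ENNReal.ofReal ρh > ENNReal.ofReal ρ + exs A C) :
    dl (c, (0 : ℝ)) (ENNReal.ofReal ρ) (epi f) (epi g)
      ≤ max (exs A C)
          (ENNReal.ofReal (κ ρh) * (exs A C) ^ α + ⨆ x ∈ C, eAbsDiff (f x) (g x)) := by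
  set S : ℝ≥0∞ := ⨆ x ∈ C, eAbsDiff (f x) (g x) with hSdef
  have hS : ∀ y ∈ C, eAbsDiff (f y) (g y) ≤ S :=
    fun y hy => le_iSup₂ (f := fun x _ => eAbsDiff (f x) (g x)) y hy
  have hS' : ∀ y ∈ C, eAbsDiff (g y) (f y) ≤ S :=
    fun y hy => (eAbsDiff_comm (g y) (f y)) ▸ hS y hy
  have hAf : ∀ x, f x ≤ ((ρ : ℝ) : EReal) → x ∈ Metric.closedBall c ρ → x ∈ A :=
    fun x h1 h2 => hA ▸ ⟨Or.inl h1, h2⟩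
  have hAg : ∀ x, g x ≤ ((ρ : ℝ) : EReal) → x ∈ Metric.closedBall c ρ → x ∈ A :=
    fun x h1 h2 => hA ▸ ⟨Or.inr h1, h2⟩
  exact max_le
    (half c f g κ hκ α hα hfH C ρ ρh hρ A hAf hρh S hS)
    (half c g f κ hκ α hα hgH C ρ ρh hρ A hAg hρh S hS')
end
end

section
/- Let X be a metric space, f_1, g_1 : X → [−∞,∞] α-Hölder continuous with common modulus κ and exponent α ∈ (0,∞), and f_2, g_2 : X → [−∞,∞] such that epi(f_1+f_2) and epi(g_1+g_2) are nonempty. For ρ ≥ 0, let A_ρ = (lev_ρ(f_1+f_2) ∪ lev_ρ(g_1+g_2)) ∩ B_X(ρ) be nonempty, ρ̄ ≥ ρ + max{sup_{B_X(ρ)}|f_1|, sup_{B_X(ρ)}|g_1|}, η = dl_{ρ̄}(epi f_2, epi g_2), and ρ̂ > ρ + η. Then dl_ρ(epi(f_1+f_2), epi(g_1+g_2)) ≤ sup_{A_ρ}|f_1 − g_1| + η + κ(ρ̂)·η^α. -/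
open Set Filter Metric ENNReal Pointwise Classical

noncomputable section

/-- Extended-real addition with the minimization-oriented convention `∞ + (-∞) = ∞`. -/
def eAdd (a b : EReal) : EReal := if a = ⊤ ∨ b = ⊤ then ⊤ else a + b


lemma ennreal_coe_ereal_toReal_s14 {a : ℝ≥0∞} (h : a ≠ ⊤) : (a : EReal) = ((a.toReal : ℝ) : EReal) := by
  conv_lhs => rw [← ENNReal.ofReal_toReal h]
  rw [EReal.coe_ennreal_ofReal, max_eq_left ENNReal.toReal_nonneg]

lemma eAbsDiff_coe (a b : ℝ) : eAbsDiff (a : EReal) (b : EReal) = ENNReal.ofReal |a - b| := by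
  unfold eAbsDiff
  have hset : {ε : ℝ≥0∞ | (a : EReal) ≤ (b : EReal) + ε ∧ (b : EReal) ≤ (a : EReal) + ε}
      = Ici (ENNReal.ofReal |a - b|) := by
    ext ε
    rcases eq_or_ne ε ⊤ with rfl | hε
    · simp [EReal.coe_ennreal_top, EReal.coe_add_top, le_top]
    · rw [mem_setOf_eq, mem_Ici, ennreal_coe_ereal_toReal_s14 hε, ← EReal.coe_add, ← EReal.coe_add,
        EReal.coe_le_coe_iff, EReal.coe_le_coe_iff, ENNReal.ofReal_le_iff_le_toReal hε,
        abs_sub_le_iff]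
      constructor <;> (intro h; constructor <;> linarith [h.1, h.2])
  rw [hset, csInf_Ici]

lemma eAbsDiff_ne_top_real {a : EReal} {b : ℝ} (h : eAbsDiff a (b : EReal) ≠ ⊤) :
    ∃ a' : ℝ, a = (a' : EReal) := by
  have h' : sInf {ε : ℝ≥0∞ | a ≤ (b:EReal) + ε ∧ (b:EReal) ≤ a + ε} < ⊤ :=
    lt_top_iff_ne_top.mpr h
  obtain ⟨ε, ⟨h1, h2⟩, hεt⟩ := sInf_lt_iff.mp h'
  rw [ennreal_coe_ereal_toReal_s14 hεt.ne] at h1 h2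
  have hat : a ≠ ⊤ := by
    intro hh; rw [hh] at h1; rw [← EReal.coe_add] at h1
    exact not_le.mpr (EReal.coe_lt_top _) h1
  have hab : a ≠ ⊥ := by
    intro hh; rw [hh, EReal.bot_add] at h2; exact (not_le.mpr (EReal.bot_lt_coe b) h2)
  lift a to ℝ using ⟨hat, hab⟩; exact ⟨a, rfl⟩

lemma ereal_le_sub {u : EReal} {a r : ℝ} (h : (a : EReal) + u ≤ (r : EReal)) :
    u ≤ ((r - a : ℝ) : EReal) := by
  induction u using EReal.rec with
  | bot => exact bot_le
  | coe b =>
    rw [← EReal.coe_add, EReal.coe_le_coe_iff] at h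
    exact EReal.coe_le_coe_iff.mpr (by linarith)
  | top => rw [EReal.coe_add_top] at h; exact (not_le.mpr (EReal.coe_lt_top r) h).elim

lemma real_edist_eq (s t : ℝ) : edist s t = ENNReal.ofReal |s - t| := by
  rw [edist_dist, Real.dist_eq]

lemma key {X : Type*} [MetricSpace X] (c : X) (f₁ f₂ g₁ g₂ : X → EReal)
    (κh : ℝ≥0∞) (hκh : κh ≠ ⊤) (α : ℝ) (hα : 0 < α)
    (ρ ρb ρh : ℝ) (hρ : 0 ≤ ρ)
    (hgH : ∀ x ∈ Metric.closedBall c ρh, ∀ y ∈ Metric.closedBall c ρh,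
        eAbsDiff (g₁ x) (g₁ y) ≤ κh * (edist x y) ^ α)
    (hfin_f : ∀ x ∈ Metric.closedBall c ρ,
        ENNReal.ofReal ρ + eAbsDiff (f₁ x) 0 ≤ ENNReal.ofReal ρb)
    (hfin_g : ∀ x ∈ Metric.closedBall c ρ, eAbsDiff (g₁ x) 0 ≠ ⊤)
    (η : ℝ≥0∞) (hηt : η ≠ ⊤)
    (hexs : exs (epi f₂ ∩ EMetric.closedBall (c, (0:ℝ)) (ENNReal.ofReal ρb)) (epi g₂) ≤ η)
    (hρh : ENNReal.ofReal ρh > ENNReal.ofReal ρ + η)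
    (S : ℝ≥0∞)
    (hS : ∀ x ∈ Metric.closedBall c ρ, eAdd (f₁ x) (f₂ x) ≤ ((ρ : ℝ) : EReal) →
        eAbsDiff (f₁ x) (g₁ x) ≤ S) :
    exs (epi (fun x => eAdd (f₁ x) (f₂ x)) ∩ EMetric.closedBall (c, (0:ℝ)) (ENNReal.ofReal ρ))
      (epi (fun x => eAdd (g₁ x) (g₂ x))) ≤ S + η + κh * η ^ α := by
  set T := S + η + κh * η ^ α with hT
  rcases eq_or_ne T ⊤ with hTtop | hTfin
  · rw [hTtop]; exact le_top
  have hSfin : S ≠ ⊤ := fun h => hTfin (by simp [hT, h])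
  -- basic positivity facts
  have hρh_pos : (0:ℝ) < ρh := ENNReal.ofReal_pos.mp (zero_le.trans_lt hρh)
  have hρρh : ρ ≤ ρh := by
    have : ENNReal.ofReal ρ < ENNReal.ofReal ρh :=
      (le_add_right le_rfl).trans_lt hρh
    exact ((ENNReal.ofReal_lt_ofReal_iff hρh_pos).mp this).le
  refine iSup₂_le ?_
  rintro ⟨x, r⟩ ⟨hpF, hpB⟩
  change edist (x, r) (c, (0:ℝ)) ≤ ENNReal.ofReal ρ at hpB
  rw [Prod.edist_eq, max_le_iff] at hpB
  obtain ⟨hxB, hrB⟩ := hpB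
  have hx : x ∈ Metric.closedBall c ρ := by
    rw [Metric.mem_closedBall]
    rw [edist_dist] at hxB
    exact (ENNReal.ofReal_le_ofReal_iff hρ).mp hxB
  have hrρ : |r| ≤ ρ := by
    rw [real_edist_eq, sub_zero] at hrB
    exact (ENNReal.ofReal_le_ofReal_iff hρ).mp hrB
  -- f₁ x is real
  have hf1fin : eAbsDiff (f₁ x) 0 ≠ ⊤ := by
    intro h
    have := hfin_f x hx
    rw [h, add_top] at this
    exact not_le.mpr (lt_top_iff_ne_top.mpr ENNReal.ofReal_ne_top) this
  obtain ⟨a, ha⟩ : ∃ a' : ℝ, f₁ x = (a' : EReal) := by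
    apply eAbsDiff_ne_top_real (b := 0)
    rwa [EReal.coe_zero]
  -- decompose the epigraph condition
  have hpF' : eAdd (f₁ x) (f₂ x) ≤ (r : EReal) := hpF
  have hne : ¬(f₁ x = ⊤ ∨ f₂ x = ⊤) := by
    intro hor
    rw [eAdd, if_pos hor] at hpF'
    exact not_le.mpr (EReal.coe_lt_top r) hpF'
  have hsum : f₁ x + f₂ x ≤ (r : EReal) := by rwa [eAdd, if_neg hne] at hpF'
  rw [ha] at hsum
  have hf2 : f₂ x ≤ ((r - a : ℝ) : EReal) := ereal_le_sub hsum
  set s : ℝ := r - a with hs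
  -- (x, s) belongs to epi f₂ ∩ B(ρb)
  have habs_a : ENNReal.ofReal |a| = eAbsDiff (f₁ x) 0 := by
    rw [ha, ← EReal.coe_zero, eAbsDiff_coe, sub_zero]
  have hxρb : edist x c ≤ ENNReal.ofReal ρb :=
    hxB.trans ((le_add_right le_rfl).trans (hfin_f x hx))
  have hsmem : (x, s) ∈ epi f₂ ∩ EMetric.closedBall (c, (0:ℝ)) (ENNReal.ofReal ρb) := by
    constructor
    · exact hf2
    · change edist (x, s) (c, (0:ℝ)) ≤ ENNReal.ofReal ρb
      rw [Prod.edist_eq, max_le_iff]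
      refine ⟨hxρb, ?_⟩
      rw [real_edist_eq, sub_zero]
      calc ENNReal.ofReal |s| ≤ ENNReal.ofReal (|r| + |a|) := by
            apply ENNReal.ofReal_le_ofReal
            rw [hs]; exact (abs_sub _ _)
        _ ≤ ENNReal.ofReal |r| + ENNReal.ofReal |a| := ENNReal.ofReal_add_le
        _ ≤ ENNReal.ofReal ρ + eAbsDiff (f₁ x) 0 := by
            rw [habs_a]
            exact add_le_add_left (ENNReal.ofReal_le_ofReal hrρ) _
        _ ≤ ENNReal.ofReal ρb := hfin_f x hx
  have hinf : EMetric.infEdist (x, s) (epi g₂) ≤ η :=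
    le_trans (le_iSup₂ (f := fun p (_ : p ∈ _) => EMetric.infEdist p (epi g₂)) (x, s) hsmem) hexs
  -- ε₀
  set ε₀ : ℝ≥0∞ := ENNReal.ofReal ρh - (ENNReal.ofReal ρ + η) with hε₀def
  have hε₀pos : 0 < ε₀ := by
    rw [hε₀def, lt_tsub_iff_right, zero_add]; exact hρh
  -- tendsto
  have hcont : Continuous (fun ε : ℝ≥0∞ => S + (η + ε) + κh * (η + ε) ^ α) := by
    have h1 : Continuous (fun ε : ℝ≥0∞ => η + ε) := continuous_const.add continuous_id
    have h2 : Continuous (fun ε : ℝ≥0∞ => (η + ε) ^ α) :=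
      ENNReal.continuous_rpow_const.comp h1
    have h3 : Continuous (fun ε : ℝ≥0∞ => κh * (η + ε) ^ α) :=
      (ENNReal.continuous_const_mul hκh).comp h2
    exact (continuous_const.add h1).add h3
  have htend : Tendsto (fun ε : ℝ≥0∞ => S + (η + ε) + κh * (η + ε) ^ α)
      (nhdsWithin 0 (Set.Ioi 0)) (nhds T) := by
    have := (hcont.tendsto 0).mono_left (nhdsWithin_le_nhds (s := Set.Ioi (0:ℝ≥0∞)))
    simpa [hT] using this
  refine ge_of_tendsto htend ?_
  filter_upwards [Ioo_mem_nhdsGT_of_mem ⟨le_refl (0:ℝ≥0∞), hε₀pos⟩] with ε hε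
  have hε₀top : ε₀ ≠ ⊤ := by
    rw [hε₀def]
    exact fun h => ENNReal.ofReal_ne_top (top_le_iff.mp (h ▸ tsub_le_self : (⊤:ℝ≥0∞) ≤ _))
  have hεt : ε ≠ ⊤ := (hε.2.trans (lt_top_iff_ne_top.mpr hε₀top)).ne
  have hηε : η + ε ≠ ⊤ := ENNReal.add_ne_top.mpr ⟨hηt, hεt⟩
  have hlt : EMetric.infEdist (x, s) (epi g₂) < η + ε :=
    hinf.trans_lt (ENNReal.lt_add_right hηt hε.1.ne')
  obtain ⟨⟨y, t⟩, hyt, hdist⟩ := EMetric.infEdist_lt_iff.mp hlt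
  rw [Prod.edist_eq, max_lt_iff] at hdist
  obtain ⟨dxy, dst⟩ := hdist
  have hg2y : g₂ y ≤ (t : EReal) := hyt
  -- y ∈ B(ρh)
  have hxρhB : x ∈ Metric.closedBall c ρh :=
    Metric.mem_closedBall.mpr ((Metric.mem_closedBall.mp hx).trans hρρh)
  have hyρh : y ∈ Metric.closedBall c ρh := by
    have h1 : edist y c ≤ (η + ε) + ENNReal.ofReal ρ := by
      calc edist y c ≤ edist y x + edist x c := edist_triangle _ _ _
        _ ≤ (η + ε) + ENNReal.ofReal ρ := by
            exact add_le_add ((edist_comm y x ▸ dxy.le)) hxB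
    have h2 : (η + ε) + ENNReal.ofReal ρ ≤ ENNReal.ofReal ρh := by
      have := lt_tsub_iff_right.mp hε.2
      calc (η + ε) + ENNReal.ofReal ρ = ε + (ENNReal.ofReal ρ + η) := by ring
        _ ≤ ENNReal.ofReal ρh := this.le
    rw [Metric.mem_closedBall]
    have := h1.trans h2
    rw [edist_dist] at this
    exact (ENNReal.ofReal_le_ofReal_iff hρh_pos.le).mp this
  -- Hölder bound
  have hH : eAbsDiff (g₁ x) (g₁ y) ≤ κh * (η + ε) ^ α := by
    refine (hgH x hxρhB y hyρh).trans ?_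
    exact mul_le_mul_right (ENNReal.rpow_le_rpow dxy.le hα.le) κh
  have hHfin : κh * (η + ε) ^ α ≠ ⊤ :=
    ENNReal.mul_ne_top hκh (ENNReal.rpow_ne_top_of_nonneg hα.le hηε)
  -- g₁ x and g₁ y are real
  obtain ⟨b, hb⟩ : ∃ b : ℝ, g₁ x = (b : EReal) := by
    apply eAbsDiff_ne_top_real (b := 0)
    rw [EReal.coe_zero]; exact hfin_g x hx
  obtain ⟨b', hb'⟩ : ∃ b' : ℝ, g₁ y = (b' : EReal) := by
    apply eAbsDiff_ne_top_real (b := b)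
    rw [← hb, eAbsDiff_comm]
    exact ne_top_of_le_ne_top hHfin hH
  have habs_bb : ENNReal.ofReal |b - b'| ≤ κh * (η + ε) ^ α := by
    rw [hb, hb', eAbsDiff_coe] at hH; exact hH
  -- candidate point in epi of the g-sum
  have hq : (y, t + b') ∈ epi (fun x => eAdd (g₁ x) (g₂ x)) := by
    have hne' : ¬(g₁ y = ⊤ ∨ g₂ y = ⊤) := by
      rintro (h | h)
      · rw [hb'] at h; exact EReal.coe_ne_top b' h
      · rw [h] at hg2y; exact not_le.mpr (EReal.coe_lt_top t) hg2y
    show eAdd (g₁ y) (g₂ y) ≤ ((t + b' : ℝ) : EReal)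
    rw [eAdd, if_neg hne', hb']
    calc (b' : EReal) + g₂ y ≤ (b' : EReal) + (t : EReal) := add_le_add_right hg2y _
      _ = ((b' + t : ℝ) : EReal) := (EReal.coe_add _ _).symm
      _ = ((t + b' : ℝ) : EReal) := by rw [add_comm]
  -- distance estimate
  have hxA : eAbsDiff (f₁ x) (g₁ x) ≤ S := by
    apply hS x hx
    refine hpF'.trans (EReal.coe_le_coe_iff.mpr ?_)
    exact (le_abs_self r).trans hrρ
  have habs_ab : ENNReal.ofReal |a - b| ≤ S := by
    rwa [ha, hb, eAbsDiff_coe] at hxA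
  have hkey : edist ((x, r) : X × ℝ) (y, t + b') ≤ S + (η + ε) + κh * (η + ε) ^ α := by
    rw [Prod.edist_eq, max_le_iff]
    constructor
    · calc edist x y ≤ η + ε := dxy.le
        _ ≤ S + (η + ε) + κh * (η + ε) ^ α := by
            calc (η + ε) ≤ S + (η + ε) := le_add_self
              _ ≤ S + (η + ε) + κh * (η + ε) ^ α := le_add_right le_rfl
    · have hdecomp : r - (t + b') = (s - t) + (a - b) + (b - b') := by rw [hs]; ring
      calc edist r (t + b') = ENNReal.ofReal |r - (t + b')| := real_edist_eq _ _
        _ = ENNReal.ofReal |(s - t) + (a - b) + (b - b')| := by rw [hdecomp]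
        _ ≤ ENNReal.ofReal (|(s - t) + (a - b)| + |b - b'|) :=
            ENNReal.ofReal_le_ofReal (abs_add_le _ _)
        _ ≤ ENNReal.ofReal |(s - t) + (a - b)| + ENNReal.ofReal |b - b'| :=
            ENNReal.ofReal_add_le
        _ ≤ (ENNReal.ofReal |s - t| + ENNReal.ofReal |a - b|) + ENNReal.ofReal |b - b'| := by
            refine add_le_add_left ?_ _
            exact (ENNReal.ofReal_le_ofReal (abs_add_le _ _)).trans ENNReal.ofReal_add_le
        _ ≤ ((η + ε) + S) + κh * (η + ε) ^ α := by
            refine add_le_add (add_le_add ?_ habs_ab) habs_bb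
            rw [← real_edist_eq]; exact dst.le
        _ = S + (η + ε) + κh * (η + ε) ^ α := by rw [add_comm (η + ε) S]
  exact le_trans (EMetric.infEdist_le_edist_of_mem hq) hkey

/-- sums under Hölder continuity. -/
theorem stmt14 {X : Type*} [MetricSpace X] (c : X) (f₁ f₂ g₁ g₂ : X → EReal)
    (κ : ℝ → ℝ) (hκ : ∀ r, 0 ≤ κ r) (α : ℝ) (hα : 0 < α)
    (hf₁H : ∀ r : ℝ, 0 ≤ r → ∀ x ∈ Metric.closedBall c r, ∀ x' ∈ Metric.closedBall c r,
        eAbsDiff (f₁ x) (f₁ x') ≤ ENNReal.ofReal (κ r * dist x x' ^ α))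
    (hg₁H : ∀ r : ℝ, 0 ≤ r → ∀ x ∈ Metric.closedBall c r, ∀ x' ∈ Metric.closedBall c r,
        eAbsDiff (g₁ x) (g₁ x') ≤ ENNReal.ofReal (κ r * dist x x' ^ α))
    (hfepi : (epi (fun x => eAdd (f₁ x) (f₂ x))).Nonempty)
    (hgepi : (epi (fun x => eAdd (g₁ x) (g₂ x))).Nonempty)
    (ρ ρb ρh : ℝ) (hρ : 0 ≤ ρ) (A : Set X)
    (hA : A = ({x | eAdd (f₁ x) (f₂ x) ≤ ((ρ : ℝ) : EReal)}
        ∪ {x | eAdd (g₁ x) (g₂ x) ≤ ((ρ : ℝ) : EReal)}) ∩ Metric.closedBall c ρ)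
    (hAne : A.Nonempty)
    (hρb : ENNReal.ofReal ρb ≥ ENNReal.ofReal ρ +
      max (⨆ x ∈ Metric.closedBall c ρ, eAbsDiff (f₁ x) 0)
        (⨆ x ∈ Metric.closedBall c ρ, eAbsDiff (g₁ x) 0))
    (η : ℝ≥0∞) (hη : η = dl (c, (0 : ℝ)) (ENNReal.ofReal ρb) (epi f₂) (epi g₂))
    (hρh : ENNReal.ofReal ρh > ENNReal.ofReal ρ + η) :
    dl (c, (0 : ℝ)) (ENNReal.ofReal ρ)
        (epi (fun x => eAdd (f₁ x) (f₂ x))) (epi (fun x => eAdd (g₁ x) (g₂ x)))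
      ≤ (⨆ x ∈ A, eAbsDiff (f₁ x) (g₁ x)) + η + ENNReal.ofReal (κ ρh) * η ^ α := by
  have hηt : η ≠ ⊤ := by
    intro h
    rw [h, add_top] at hρh
    exact absurd hρh (not_lt.mpr le_top)
  have hρh_pos : (0:ℝ) < ρh := ENNReal.ofReal_pos.mp (zero_le.trans_lt hρh)
  set κh := ENNReal.ofReal (κ ρh) with hκhdef
  have hκht : κh ≠ ⊤ := ENNReal.ofReal_ne_top
  have hconv : ∀ h : X → EReal,
      (∀ r : ℝ, 0 ≤ r → ∀ x ∈ Metric.closedBall c r, ∀ x' ∈ Metric.closedBall c r,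
        eAbsDiff (h x) (h x') ≤ ENNReal.ofReal (κ r * dist x x' ^ α)) →
      ∀ x ∈ Metric.closedBall c ρh, ∀ y ∈ Metric.closedBall c ρh,
        eAbsDiff (h x) (h y) ≤ κh * (edist x y) ^ α := by
    intro h hH x hx y hy
    refine (hH ρh hρh_pos.le x hx y hy).trans ?_
    rw [ENNReal.ofReal_mul (hκ ρh), edist_dist,
      ENNReal.ofReal_rpow_of_nonneg dist_nonneg hα.le]
  have hfin_f : ∀ x ∈ Metric.closedBall c ρ,
      ENNReal.ofReal ρ + eAbsDiff (f₁ x) 0 ≤ ENNReal.ofReal ρb := by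
    intro x hx
    refine le_trans (add_le_add_right ?_ _) hρb
    exact le_trans (le_iSup₂ (f := fun x (_ : x ∈ Metric.closedBall c ρ) => eAbsDiff (f₁ x) 0)
      x hx) (le_max_left _ _)
  have hfin_g : ∀ x ∈ Metric.closedBall c ρ,
      ENNReal.ofReal ρ + eAbsDiff (g₁ x) 0 ≤ ENNReal.ofReal ρb := by
    intro x hx
    refine le_trans (add_le_add_right ?_ _) hρb
    exact le_trans (le_iSup₂ (f := fun x (_ : x ∈ Metric.closedBall c ρ) => eAbsDiff (g₁ x) 0)
      x hx) (le_max_right _ _)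
  have hfin_f' : ∀ x ∈ Metric.closedBall c ρ, eAbsDiff (f₁ x) 0 ≠ ⊤ := by
    intro x hx h
    have := hfin_f x hx
    rw [h, add_top] at this
    exact ENNReal.ofReal_ne_top (top_le_iff.mp this)
  have hfin_g' : ∀ x ∈ Metric.closedBall c ρ, eAbsDiff (g₁ x) 0 ≠ ⊤ := by
    intro x hx h
    have := hfin_g x hx
    rw [h, add_top] at this
    exact ENNReal.ofReal_ne_top (top_le_iff.mp this)
  set S := ⨆ x ∈ A, eAbsDiff (f₁ x) (g₁ x) with hSdef
  rw [dl]
  refine max_le ?_ ?_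
  · refine key c f₁ f₂ g₁ g₂ κh hκht α hα ρ ρb ρh hρ (hconv g₁ hg₁H) hfin_f hfin_g' η hηt
      ?_ hρh S ?_
    · rw [hη, dl]; exact le_max_left _ _
    · intro x hx hle
      have hxA : x ∈ A := by rw [hA]; exact ⟨Or.inl hle, hx⟩
      exact le_iSup₂ (f := fun x (_ : x ∈ A) => eAbsDiff (f₁ x) (g₁ x)) x hxA
  · refine key c g₁ g₂ f₁ f₂ κh hκht α hα ρ ρb ρh hρ (hconv f₁ hf₁H) hfin_g hfin_f' η hηt
      ?_ hρh S ?_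
    · rw [hη, dl]; exact le_max_right _ _
    · intro x hx hle
      have hxA : x ∈ A := by rw [hA]; exact ⟨Or.inr hle, hx⟩
      rw [eAbsDiff_comm]
      exact le_iSup₂ (f := fun x (_ : x ∈ A) => eAbsDiff (f₁ x) (g₁ x)) x hxA
end
end

section
/- Let X, Y be metric spaces, S, T : X ⇉ Y set-valued mappings with nonempty graphs, 0 ≤ ε ≤ ρ < ∞, and y* ∈ B_Y(ρ−ε). If δ > ε + dl_ρ(gph S, gph T), then exs(S⁻¹(B_Y(y*,ε)) ∩ B_X(ρ); T⁻¹(B_Y(y*,δ))) ≤ dl_ρ(gph S, gph T), where dl_ρ is computed on X×Y with the product metric and product centroid. Moreover, if X and Y are finitely compact (all closed balls compact) and gph T is closed, the bound also holds for δ = ε + dl_ρ(gph S, gph T). -/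
open Set Filter Metric ENNReal Pointwise Classical

noncomputable section

/-- approximation of near-solutions of generalized equations. -/
theorem stmt16 {X Y : Type*} [MetricSpace X] [MetricSpace Y] (cX : X) (cY : Y)
    (S T : X → Set Y) (GS GT : Set (X × Y))
    (hGS : GS = {p : X × Y | p.2 ∈ S p.1}) (hGT : GT = {p : X × Y | p.2 ∈ T p.1})
    (hGSne : GS.Nonempty) (hGTne : GT.Nonempty)
    (ε ρ : ℝ) (hε : 0 ≤ ε) (hερ : ε ≤ ρ) (ys : Y) (hys : dist cY ys ≤ ρ - ε) :
    (∀ δ : ℝ, ENNReal.ofReal δ >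
        ENNReal.ofReal ε + dl (cX, cY) (ENNReal.ofReal ρ) GS GT →
      exs ({x | ∃ y ∈ S x, dist y ys ≤ ε} ∩ Metric.closedBall cX ρ)
          {x | ∃ y ∈ T x, dist y ys ≤ δ}
        ≤ dl (cX, cY) (ENNReal.ofReal ρ) GS GT)
    ∧ (ProperSpace X → ProperSpace Y → IsClosed GT →
      exs ({x | ∃ y ∈ S x, dist y ys ≤ ε} ∩ Metric.closedBall cX ρ)
          {x | ∃ y ∈ T x,
            edist y ys ≤ ENNReal.ofReal ε + dl (cX, cY) (ENNReal.ofReal ρ) GS GT}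
        ≤ dl (cX, cY) (ENNReal.ofReal ρ) GS GT) := by
  set D := dl (cX, cY) (ENNReal.ofReal ρ) GS GT with hD
  -- key fact: for x in the LHS set with witness y, (x,y) ∈ GS ∩ ball hence infEdist ≤ D
  have key : ∀ x ∈ ({x | ∃ y ∈ S x, dist y ys ≤ ε} ∩ Metric.closedBall cX ρ),
      ∃ y, y ∈ S x ∧ dist y ys ≤ ε ∧ EMetric.infEdist (x, y) GT ≤ D := by
    rintro x ⟨⟨y, hyS, hyε⟩, hxball⟩
    refine ⟨y, hyS, hyε, ?_⟩
    have hmem : (x, y) ∈ GS ∩ EMetric.closedBall (cX, cY) (ENNReal.ofReal ρ) := by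
      refine ⟨by rw [hGS]; exact hyS, ?_⟩
      show edist (x, y) (cX, cY) ≤ ENNReal.ofReal ρ
      rw [Prod.edist_eq, max_le_iff]
      have h1 : dist x cX ≤ ρ := by simpa [Metric.mem_closedBall] using hxball
      have h2 : dist y cY ≤ ρ := by
        calc dist y cY ≤ dist y ys + dist ys cY := dist_triangle _ _ _
          _ ≤ ε + (ρ - ε) := by
              refine add_le_add hyε ?_
              rwa [dist_comm]
          _ = ρ := by ring
      exact ⟨(edist_le_ofReal (le_trans hε hερ)).2 h1,
             (edist_le_ofReal (le_trans hε hερ)).2 h2⟩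
    calc EMetric.infEdist (x, y) GT
        ≤ exs (GS ∩ EMetric.closedBall (cX, cY) (ENNReal.ofReal ρ)) GT :=
          le_iSup₂ (f := fun p (_ : p ∈ GS ∩ EMetric.closedBall (cX, cY) (ENNReal.ofReal ρ)) =>
            EMetric.infEdist p GT) (x, y) hmem
      _ ≤ D := le_max_left _ _
  constructor
  · intro δ hδ
    have hD_lt : D < ⊤ := lt_of_le_of_lt le_add_self (lt_of_lt_of_le hδ le_top)
    refine iSup₂_le fun x hx => ?_
    obtain ⟨y, hyS, hyε, hinf⟩ := key x hx
    refine ENNReal.le_of_forall_pos_le_add fun γ hγ _ => ?_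
    set η := min (D + γ) (ENNReal.ofReal δ - ENNReal.ofReal ε) with hη
    have hεδ : ENNReal.ofReal ε ≤ ENNReal.ofReal δ :=
      le_of_lt (lt_of_le_of_lt le_self_add hδ)
    have hDη : D < η := by
      refine lt_min ?_ ?_
      · exact ENNReal.lt_add_right hD_lt.ne (by exact_mod_cast hγ.ne')
      · exact (ENNReal.cancel_of_ne ENNReal.ofReal_ne_top).lt_tsub_iff_right.2
          (by rwa [add_comm] at hδ)
    obtain ⟨p, hpGT, hplt⟩ := EMetric.infEdist_lt_iff.1 (lt_of_le_of_lt hinf hDη)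
    rw [Prod.edist_eq, max_lt_iff] at hplt
    have hy'δ : dist p.2 ys ≤ δ := by
      have hδ0 : 0 ≤ δ := by
        by_contra h
        rw [ENNReal.ofReal_eq_zero.2 (le_of_not_ge h)] at hδ
        exact (not_lt_of_ge zero_le) hδ
      rw [← edist_le_ofReal hδ0]
      calc edist p.2 ys ≤ edist p.2 y + edist y ys := edist_triangle _ _ _
        _ ≤ η + ENNReal.ofReal ε := by
            refine add_le_add (le_of_lt ?_) ((edist_le_ofReal hε).2 hyε)
            rw [edist_comm]; exact hplt.2
        _ ≤ (ENNReal.ofReal δ - ENNReal.ofReal ε) + ENNReal.ofReal ε :=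
            add_le_add (min_le_right _ _) le_rfl
        _ = ENNReal.ofReal δ := tsub_add_cancel_of_le hεδ
    have hp1 : p.1 ∈ {x | ∃ y ∈ T x, dist y ys ≤ δ} := by
      refine ⟨p.2, ?_, hy'δ⟩
      have := hpGT; rw [hGT] at this; exact this
    calc EMetric.infEdist x {x | ∃ y ∈ T x, dist y ys ≤ δ}
        ≤ edist x p.1 := EMetric.infEdist_le_edist_of_mem hp1
      _ ≤ η := le_of_lt hplt.1
      _ ≤ D + γ := min_le_left _ _
  · intro hPX hPY hGTclosed
    haveI := hPX; haveI := hPY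
    refine iSup₂_le fun x hx => ?_
    obtain ⟨y, hyS, hyε, hinf⟩ := key x hx
    obtain ⟨p, hpGT, hpdist⟩ := hGTclosed.exists_infDist_eq_dist hGTne (x, y)
    have hedist : edist (x, y) p ≤ D := by
      rw [edist_dist, ← hpdist, Metric.infDist,
        ENNReal.ofReal_toReal (Metric.infEdist_ne_top hGTne)]
      exact hinf
    rw [Prod.edist_eq, max_le_iff] at hedist
    have hp1 : p.1 ∈ {x | ∃ y ∈ T x,
        edist y ys ≤ ENNReal.ofReal ε + D} := by
      refine ⟨p.2, ?_, ?_⟩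
      · have := hpGT; rw [hGT] at this; exact this
      · calc edist p.2 ys ≤ edist p.2 y + edist y ys := edist_triangle _ _ _
          _ ≤ D + ENNReal.ofReal ε := by
              refine add_le_add ?_ ((edist_le_ofReal hε).2 hyε)
              rw [edist_comm]; exact hedist.2
          _ = ENNReal.ofReal ε + D := add_comm _ _
    calc EMetric.infEdist x {x | ∃ y ∈ T x, edist y ys ≤ ENNReal.ofReal ε + D}
        ≤ edist x p.1 := EMetric.infEdist_le_edist_of_mem hp1
      _ ≤ D := hedist.1
end
end

section
/- Let X, Y be metric spaces with centroids, f : Y → ℝ Lipschitz continuous with modulus κ : ℝ₊ → ℝ₊ (on centered balls), and F, G : X → Y. For ρ ≥ 0, if ρ̄ exceeds max{ρ, sup_{x∈B_X(ρ), f(F(x))≤ρ} d_Y(y_ctr, F(x)), sup_{x∈B_X(ρ), f(G(x))≤ρ} d_Y(y_ctr, G(x))} and ρ̂ > ρ̄ + dl_{ρ̄}(gph F, gph G), then dl_ρ(epi(f∘F), epi(f∘G)) ≤ max{1, κ(ρ̂)} · dl_{ρ̄}(gph F, gph G). -/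
open Set Filter Metric ENNReal Pointwise Classical

noncomputable section

lemma key_s17 {X Y : Type*} [MetricSpace X] [MetricSpace Y] (cX : X) (cY : Y)
    (f : Y → ℝ) (κ : ℝ → ℝ) (hκ : ∀ r, 0 ≤ κ r)
    (hfL : ∀ r : ℝ, 0 ≤ r → ∀ y ∈ Metric.closedBall cY r, ∀ y' ∈ Metric.closedBall cY r,
        |f y - f y'| ≤ κ r * dist y y')
    (F G : X → Y) (ρ ρb ρh : ℝ) (D : ℝ≥0∞)
    (hρ : 0 ≤ ρ) (hρρb : ρ < ρb) (hρb0 : 0 < ρb)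
    (hSF : (⨆ x ∈ {x | x ∈ Metric.closedBall cX ρ ∧ f (F x) ≤ ρ}, edist cY (F x))
      < ENNReal.ofReal ρb)
    (hexs : exs ({p : X × Y | p.2 = F p.1} ∩ EMetric.closedBall (cX, cY) (ENNReal.ofReal ρb))
      {p : X × Y | p.2 = G p.1} ≤ D)
    (hD : ENNReal.ofReal ρb + D < ENNReal.ofReal ρh) :
    exs (epi (fun x => ((f (F x) : ℝ) : EReal)) ∩
        EMetric.closedBall (cX, (0 : ℝ)) (ENNReal.ofReal ρ))
      (epi (fun x => ((f (G x) : ℝ) : EReal)))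
      ≤ ENNReal.ofReal (max 1 (κ ρh)) * D := by
  have hDfin : D ≠ ⊤ := by
    intro h; rw [h] at hD; simp at hD
  have hDle : D = ENNReal.ofReal D.toReal := (ENNReal.ofReal_toReal hDfin).symm
  have hsum : ρb + D.toReal < ρh := by
    rw [hDle, ← ENNReal.ofReal_add hρb0.le ENNReal.toReal_nonneg] at hD
    exact (ENNReal.ofReal_lt_ofReal_iff_of_nonneg
      (by positivity)).mp hD
  have hρh0 : 0 < ρh := lt_of_le_of_lt (by positivity) hsum
  have hκ1 : (1:ℝ) ≤ max 1 (κ ρh) := le_max_left _ _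
  set M := ENNReal.ofReal (max 1 (κ ρh)) with hM
  refine iSup₂_le fun p hp => ?_
  obtain ⟨hpe, hpb⟩ := hp
  change edist p (cX, (0:ℝ)) ≤ ENNReal.ofReal ρ at hpb
  rw [Prod.edist_eq] at hpb
  have hx : dist p.1 cX ≤ ρ := by
    have := le_trans (le_max_left _ _) hpb
    rwa [edist_dist, ENNReal.ofReal_le_ofReal_iff hρ] at this
  have hα : |p.2| ≤ ρ := by
    have := le_trans (le_max_right _ _) hpb
    rw [edist_dist, ENNReal.ofReal_le_ofReal_iff hρ, Real.dist_eq, sub_zero] at this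
    exact this
  have hfF : f (F p.1) ≤ p.2 := EReal.coe_le_coe_iff.mp hpe
  have hxset : p.1 ∈ {x | x ∈ Metric.closedBall cX ρ ∧ f (F x) ≤ ρ} :=
    ⟨hx, hfF.trans ((le_abs_self _).trans hα)⟩
  have hFball : dist cY (F p.1) < ρb := by
    have h1 : edist cY (F p.1) < ENNReal.ofReal ρb :=
      lt_of_le_of_lt (le_iSup₂ (f := fun x _ => edist cY (F x)) p.1 hxset) hSF
    exact edist_lt_ofReal.mp h1
  have hmem : ((p.1, F p.1) : X × Y) ∈ {p : X × Y | p.2 = F p.1} ∩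
      EMetric.closedBall (cX, cY) (ENNReal.ofReal ρb) := by
    refine ⟨rfl, ?_⟩
    show edist _ _ ≤ _
    rw [Prod.edist_eq]
    refine max_le ?_ ?_
    · rw [edist_dist, ENNReal.ofReal_le_ofReal_iff hρb0.le]
      exact hx.trans hρρb.le
    · rw [edist_dist, ENNReal.ofReal_le_ofReal_iff hρb0.le, dist_comm]
      exact hFball.le
  have hinf : EMetric.infEdist ((p.1, F p.1) : X × Y) {p : X × Y | p.2 = G p.1} ≤ D :=
    le_trans (le_iSup₂ (f := fun q (_ : q ∈ _) =>
      EMetric.infEdist q {p : X × Y | p.2 = G p.1}) _ hmem) hexs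
  refine ENNReal.le_of_forall_pos_le_add fun ε hε hlt => ?_
  set δ := ρh - (ρb + D.toReal) with hδdef
  have hδ : 0 < δ := by simp [hδdef]; linarith
  set t := min ((ε:ℝ) / max 1 (κ ρh)) (δ/2) with htdef
  have ht : 0 < t := lt_min (div_pos hε (by linarith)) (by linarith)
  have h1 : EMetric.infEdist ((p.1, F p.1) : X × Y) {p : X × Y | p.2 = G p.1}
      < D + ENNReal.ofReal t :=
    lt_of_le_of_lt hinf (ENNReal.lt_add_right hDfin (by simpa using (ENNReal.ofReal_pos.mpr ht).ne'))
  obtain ⟨q, hqG, hq⟩ := EMetric.infEdist_lt_iff.mp h1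
  have hqsum : edist ((p.1, F p.1) : X × Y) q < ENNReal.ofReal (D.toReal + t) := by
    rwa [ENNReal.ofReal_add ENNReal.toReal_nonneg ht.le, ← hDle]
  rw [Prod.edist_eq] at hqsum
  have hd2 : dist (F p.1) q.2 < D.toReal + t :=
    edist_lt_ofReal.mp (lt_of_le_of_lt (le_max_right _ _) hqsum)
  have hyb : dist q.2 cY ≤ ρh := by
    calc dist q.2 cY ≤ dist q.2 (F p.1) + dist (F p.1) cY := dist_triangle _ _ _
    _ ≤ (D.toReal + t) + ρb :=
        add_le_add (by rw [dist_comm]; exact hd2.le) (by rw [dist_comm]; exact hFball.le)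
    _ ≤ ρh := by
        have : t ≤ δ/2 := min_le_right _ _
        simp [hδdef] at this ⊢; linarith
  have hDnn : (0:ℝ) ≤ D.toReal := ENNReal.toReal_nonneg
  have hFb : dist (F p.1) cY ≤ ρh := by rw [dist_comm]; linarith
  have hLip := hfL ρh hρh0.le (F p.1) (Metric.mem_closedBall.mpr hFb) q.2
    (Metric.mem_closedBall.mpr hyb)
  set β := p.2 + κ ρh * dist (F p.1) q.2 with hβdef
  have hfq : f q.2 ≤ β := by
    have : f q.2 - f (F p.1) ≤ κ ρh * dist (F p.1) q.2 := by
      have := abs_le.mp hLip; linarith [this.1]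
    simp [hβdef]; linarith
  have hmemG : ((q.1, β) : X × ℝ) ∈ epi (fun x => ((f (G x) : ℝ) : EReal)) := by
    have : f (G q.1) ≤ β := by rw [← hqG]; exact hfq
    exact EReal.coe_le_coe_iff.mpr this
  have hstep : EMetric.infEdist p (epi (fun x => ((f (G x) : ℝ) : EReal)))
      ≤ edist p ((q.1, β) : X × ℝ) := EMetric.infEdist_le_edist_of_mem hmemG
  have hedistβ : edist p.2 β = ENNReal.ofReal (κ ρh * dist (F p.1) q.2) := by
    rw [edist_dist, Real.dist_eq, hβdef]
    congr 1
    rw [abs_sub_comm]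
    simp [abs_of_nonneg (mul_nonneg (hκ ρh) dist_nonneg)]
  have hbound : edist p ((q.1, β) : X × ℝ) ≤ M * edist ((p.1, F p.1) : X × Y) q := by
    rw [Prod.edist_eq, Prod.edist_eq]
    refine max_le ?_ ?_
    · calc edist p.1 q.1 ≤ max (edist p.1 q.1) (edist (F p.1) q.2) := le_max_left _ _
      _ = 1 * _ := (one_mul _).symm
      _ ≤ M * _ := mul_le_mul_of_nonneg_right (by simp [hM, ENNReal.one_le_ofReal]) (zero_le)
    · rw [hedistβ, ENNReal.ofReal_mul (hκ ρh), ← edist_dist]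
      exact mul_le_mul (ENNReal.ofReal_le_ofReal (le_max_right _ _)) (le_max_right _ _)
        (zero_le) (zero_le)
  calc EMetric.infEdist p (epi (fun x => ((f (G x) : ℝ) : EReal)))
      ≤ M * edist ((p.1, F p.1) : X × Y) q := hstep.trans hbound
    _ ≤ M * (D + ENNReal.ofReal t) := mul_le_mul_of_nonneg_left hq.le (zero_le)
    _ = M * D + M * ENNReal.ofReal t := by rw [mul_add]
    _ ≤ M * D + ε := by
        refine add_le_add le_rfl ?_
        rw [hM, ← ENNReal.ofReal_mul (by linarith), ← ENNReal.ofReal_coe_nnreal]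
        refine ENNReal.ofReal_le_ofReal ?_
        have h2 : t ≤ (ε:ℝ) / max 1 (κ ρh) := min_le_left _ _
        calc max 1 (κ ρh) * t ≤ max 1 (κ ρh) * ((ε:ℝ) / max 1 (κ ρh)) :=
          mul_le_mul_of_nonneg_left h2 (by linarith)
        _ = ε := mul_div_cancel₀ _ (by linarith)

/-- compositions with a Lipschitz continuous outer function. -/
theorem stmt17 {X Y : Type*} [MetricSpace X] [MetricSpace Y] (cX : X) (cY : Y)
    (f : Y → ℝ) (κ : ℝ → ℝ) (hκ : ∀ r, 0 ≤ κ r)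
    (hfL : ∀ r : ℝ, 0 ≤ r → ∀ y ∈ Metric.closedBall cY r, ∀ y' ∈ Metric.closedBall cY r,
        |f y - f y'| ≤ κ r * dist y y')
    (F G : X → Y) (ρ ρb ρh : ℝ) (hρ : 0 ≤ ρ)
    (hρb : ENNReal.ofReal ρb > max (ENNReal.ofReal ρ)
      (max (⨆ x ∈ {x | x ∈ Metric.closedBall cX ρ ∧ f (F x) ≤ ρ}, edist cY (F x))
           (⨆ x ∈ {x | x ∈ Metric.closedBall cX ρ ∧ f (G x) ≤ ρ}, edist cY (G x))))
    (hρh : ENNReal.ofReal ρh > ENNReal.ofReal ρb +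
      dl (cX, cY) (ENNReal.ofReal ρb) {p : X × Y | p.2 = F p.1} {p | p.2 = G p.1}) :
    dl (cX, (0 : ℝ)) (ENNReal.ofReal ρ)
        (epi (fun x => ((f (F x) : ℝ) : EReal))) (epi (fun x => ((f (G x) : ℝ) : EReal)))
      ≤ ENNReal.ofReal (max 1 (κ ρh)) *
        dl (cX, cY) (ENNReal.ofReal ρb) {p : X × Y | p.2 = F p.1} {p | p.2 = G p.1} := by
  set D := dl (cX, cY) (ENNReal.ofReal ρb) {p : X × Y | p.2 = F p.1} {p | p.2 = G p.1} with hDdef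
  have hρb0 : 0 < ρb := by
    have : (0:ℝ≥0∞) < ENNReal.ofReal ρb := lt_of_le_of_lt (zero_le) hρb
    exact ENNReal.ofReal_pos.mp this
  have hρρb : ρ < ρb := by
    have : ENNReal.ofReal ρ < ENNReal.ofReal ρb := lt_of_le_of_lt (le_max_left _ _) hρb
    exact (ENNReal.ofReal_lt_ofReal_iff_of_nonneg hρ).mp this
  have hSF : (⨆ x ∈ {x | x ∈ Metric.closedBall cX ρ ∧ f (F x) ≤ ρ}, edist cY (F x))
      < ENNReal.ofReal ρb :=
    lt_of_le_of_lt ((le_max_left _ _).trans (le_max_right _ _)) hρb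
  have hSG : (⨆ x ∈ {x | x ∈ Metric.closedBall cX ρ ∧ f (G x) ≤ ρ}, edist cY (G x))
      < ENNReal.ofReal ρb :=
    lt_of_le_of_lt ((le_max_right _ _).trans (le_max_right _ _)) hρb
  have h1 := key_s17 cX cY f κ hκ hfL F G ρ ρb ρh D hρ hρρb hρb0 hSF (le_max_left _ _) hρh
  have h2 := key_s17 cX cY f κ hκ hfL G F ρ ρb ρh D hρ hρρb hρb0 hSG (le_max_right _ _) hρh
  exact max_le h1 h2
end
end

section
/- Let φ, ψ : ℝ^m → [−∞,∞] be proper lsc functions, F, G : ℝ^n → ℝ^m continuously differentiable, and define S, T : ℝ^n×ℝ^m×ℝ^m ⇉ ℝ^m×ℝ^m×ℝ^n by S(x,y,z) = ({F(x)−z}, ∂φ(z)−{y}, {∇F(x)ᵀy}) and T(x,y,z) = ({G(x)−z}, ∂ψ(z)−{y}, {∇G(x)ᵀy}). Then for any ρ ≥ 0, dl_ρ(gph S, gph T) ≤ sup_{‖x‖≤ρ} max{ ‖G(x)−F(x)‖ + dl_{2ρ}(gph ∂φ, gph ∂ψ), ρ·‖∇G(x)ᵀ − ∇F(x)ᵀ‖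 }, where the graph distances use the product norm built from given norms on ℝ^n, ℝ^m and a matrix norm compatible with the norm on ℝ^m. -/
open Set Filter Metric ENNReal Pointwise Classical

noncomputable section

/-- Regular (Fréchet) subgradients of `φ` at `x`. -/
def fSubgrad {E : Type*} [NormedAddCommGroup E] [InnerProductSpace ℝ E]
    (φ : E → EReal) (x : E) : Set E :=
  {v | φ x ≠ ⊤ ∧ φ x ≠ ⊥ ∧ ∀ ε : ℝ, 0 < ε → ∃ δ > 0, ∀ y, ‖y - x‖ ≤ δ →
    φ x + (((inner ℝ v (y - x) : ℝ) - ε * ‖y - x‖ : ℝ) : EReal) ≤ φ y}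

/-- General (limiting/Mordukhovich) subgradients of `φ` at `x`. -/
def limSubgrad {E : Type*} [NormedAddCommGroup E] [InnerProductSpace ℝ E]
    (φ : E → EReal) (x : E) : Set E :=
  {v | ∃ xs vs : ℕ → E, (∀ n, vs n ∈ fSubgrad φ (xs n)) ∧
    Tendsto xs atTop (nhds x) ∧ Tendsto (fun n => φ (xs n)) atTop (nhds (φ x)) ∧
    Tendsto vs atTop (nhds v)}

lemma dl_comm {X : Type*} [PseudoEMetricSpace X] (c : X) (ρ : ℝ≥0∞) (A B : Set X) :
    dl c ρ A B = dl c ρ B A := max_comm _ _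

lemma aux18 {n m : ℕ}
    (Sφ Sψ : Set (EuclideanSpace ℝ (Fin m) × EuclideanSpace ℝ (Fin m)))
    (F G : EuclideanSpace ℝ (Fin n) → EuclideanSpace ℝ (Fin m))
    (A B : EuclideanSpace ℝ (Fin n) → (EuclideanSpace ℝ (Fin m) →L[ℝ] EuclideanSpace ℝ (Fin n)))
    (ρ : ℝ) (hρ : 0 ≤ ρ) :
    exs ({q : (EuclideanSpace ℝ (Fin n) × EuclideanSpace ℝ (Fin m) × EuclideanSpace ℝ (Fin m))
          × (EuclideanSpace ℝ (Fin m) × EuclideanSpace ℝ (Fin m) × EuclideanSpace ℝ (Fin n)) |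
          q.2.1 = F q.1.1 - q.1.2.2 ∧ (q.1.2.2, q.2.2.1 + q.1.2.1) ∈ Sφ ∧
          q.2.2.2 = A q.1.1 q.1.2.1} ∩ EMetric.closedBall 0 (ENNReal.ofReal ρ))
        {q | q.2.1 = G q.1.1 - q.1.2.2 ∧ (q.1.2.2, q.2.2.1 + q.1.2.1) ∈ Sψ ∧
          q.2.2.2 = B q.1.1 q.1.2.1}
      ≤ ⨆ x ∈ Metric.closedBall (0 : EuclideanSpace ℝ (Fin n)) ρ,
          max (ENNReal.ofReal ‖G x - F x‖ + dl 0 (ENNReal.ofReal (2 * ρ)) Sφ Sψ)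
            (ENNReal.ofReal (ρ * ‖B x - A x‖)) := by
  unfold exs
  apply iSup₂_le
  rintro ⟨⟨x, y, z⟩, u, v, w⟩ ⟨⟨hu', hvy', hw'⟩, hball⟩
  have hu : u = F x - z := hu'
  have hvy : (z, v + y) ∈ Sφ := hvy'
  have hw : w = A x y := hw'
  have norm_le : ∀ {k : ℕ} (a : EuclideanSpace ℝ (Fin k)) (r : ℝ), 0 ≤ r →
      edist a 0 ≤ ENNReal.ofReal r → ‖a‖ ≤ r := by
    intro k a r hr h
    rwa [edist_dist, ENNReal.ofReal_le_ofReal_iff hr, dist_zero_right] at h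
  rw [EMetric.closedBall, Metric.mem_closedEBall, Prod.edist_eq, Prod.edist_eq, Prod.edist_eq, Prod.edist_eq, Prod.edist_eq] at hball
  simp only [Prod.fst_zero, Prod.snd_zero] at hball
  rw [max_le_iff, max_le_iff, max_le_iff, max_le_iff, max_le_iff] at hball
  obtain ⟨⟨hbx, hby, hbz⟩, hbu, hbv, hbw⟩ := hball
  have hx : ‖x‖ ≤ ρ := norm_le _ _ hρ hbx
  have hy : ‖y‖ ≤ ρ := norm_le _ _ hρ hby
  have hz : ‖z‖ ≤ ρ := norm_le _ _ hρ hbz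
  set d := dl (0 : EuclideanSpace ℝ (Fin m) × EuclideanSpace ℝ (Fin m))
      (ENNReal.ofReal (2 * ρ)) Sφ Sψ with hdDef
  have hd : EMetric.infEdist (z, v + y) Sψ ≤ d := by
    have hmem : (z, v + y) ∈ Sφ ∩ EMetric.closedBall 0 (ENNReal.ofReal (2 * ρ)) := by
      refine ⟨hvy, ?_⟩
      rw [EMetric.closedBall, Metric.mem_closedEBall, Prod.edist_eq]
      simp only [Prod.fst_zero, Prod.snd_zero]
      rw [max_le_iff]
      constructor <;> rw [edist_dist, dist_zero_right] <;>
        apply ENNReal.ofReal_le_ofReal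
      · linarith
      · calc ‖v + y‖ ≤ ‖v‖ + ‖y‖ := norm_add_le _ _
          _ ≤ 2 * ρ := by have := norm_le v ρ hρ hbv; linarith
    calc EMetric.infEdist (z, v + y) Sψ
        ≤ exs (Sφ ∩ EMetric.closedBall 0 (ENNReal.ofReal (2 * ρ))) Sψ :=
          le_iSup₂ (f := fun p (_ : p ∈ _) => EMetric.infEdist p Sψ) (z, v + y) hmem
      _ ≤ d := le_max_left _ _
  set M := max (ENNReal.ofReal ‖G x - F x‖ + d) (ENNReal.ofReal (ρ * ‖B x - A x‖)) with hM
  have key : EMetric.infEdist ((x, y, z), (u, v, w))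
      {q : (EuclideanSpace ℝ (Fin n) × EuclideanSpace ℝ (Fin m) × EuclideanSpace ℝ (Fin m))
          × (EuclideanSpace ℝ (Fin m) × EuclideanSpace ℝ (Fin m) × EuclideanSpace ℝ (Fin n)) |
          q.2.1 = G q.1.1 - q.1.2.2 ∧ (q.1.2.2, q.2.2.1 + q.1.2.1) ∈ Sψ ∧
          q.2.2.2 = B q.1.1 q.1.2.1} ≤ M := by
    rcases eq_top_or_lt_top d with hdt | hdt
    · refine le_trans le_top ?_
      rw [hM, hdt]
      simp
    · apply ENNReal.le_of_forall_pos_le_add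
      intro ε hε _
      have hlt : EMetric.infEdist (z, v + y) Sψ < d + ε :=
        lt_of_le_of_lt hd (ENNReal.lt_add_right hdt.ne (by exact_mod_cast hε.ne'))
      rw [EMetric.infEdist, EMetric.infEdist_lt_iff] at hlt
      obtain ⟨⟨z', s'⟩, hmem', hdist⟩ := hlt
      rw [Prod.edist_eq, max_lt_iff] at hdist
      obtain ⟨hdz, hds⟩ := hdist
      refine le_trans (EMetric.infEdist_le_edist_of_mem
        (y := ((x, y, z'), (G x - z', s' - y, B x y))) ?_) ?_
      · exact ⟨rfl, by simpa [sub_add_cancel] using hmem', rfl⟩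
      · rw [Prod.edist_eq, Prod.edist_eq, Prod.edist_eq, Prod.edist_eq, Prod.edist_eq]
        simp only [edist_self]
        rw [max_le_iff, max_le_iff, max_le_iff, max_le_iff, max_le_iff]
        have h1 : edist z z' ≤ d + ε := hdz.le
        have h2 : edist u (G x - z') ≤ ENNReal.ofReal ‖G x - F x‖ + (d + ε) := by
          rw [hu]
          calc edist (F x - z) (G x - z')
              = (‖(F x - z) - (G x - z')‖₊ : ℝ≥0∞) := edist_eq_enorm_sub _ _
            _ = (‖(F x - G x) - (z - z')‖₊ : ℝ≥0∞) := by
                rw [show F x - z - (G x - z') = F x - G x - (z - z') by abel]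
            _ ≤ (‖F x - G x‖₊ : ℝ≥0∞) + (‖z - z'‖₊ : ℝ≥0∞) := by
                rw [← ENNReal.coe_add]
                exact_mod_cast nnnorm_sub_le _ _
            _ ≤ ENNReal.ofReal ‖G x - F x‖ + (d + ε) := by
                apply add_le_add
                · rw [← enorm_eq_nnnorm, ← ofReal_norm, norm_sub_rev]
                · rw [← enorm_eq_nnnorm, ← edist_eq_enorm_sub]; exact hdz.le
        have h3 : edist v (s' - y) ≤ d + ε := by
          have : edist v (s' - y) = edist (v + y) s' := by
            rw [edist_eq_enorm_sub, edist_eq_enorm_sub, enorm_eq_nnnorm, enorm_eq_nnnorm]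
            congr 2
            abel
          rw [this]; exact hds.le
        have h4 : edist w (B x y) ≤ ENNReal.ofReal (ρ * ‖B x - A x‖) := by
          rw [hw, edist_dist, dist_eq_norm]
          apply ENNReal.ofReal_le_ofReal
          calc ‖A x y - B x y‖ = ‖(A x - B x) y‖ := by
                rw [ContinuousLinearMap.sub_apply]
            _ ≤ ‖A x - B x‖ * ‖y‖ := (A x - B x).le_opNorm y
            _ ≤ ‖B x - A x‖ * ρ := by
                rw [norm_sub_rev]
                exact mul_le_mul_of_nonneg_left hy (norm_nonneg _)
            _ = ρ * ‖B x - A x‖ := mul_comm _ _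
        have hMε1 : ENNReal.ofReal ‖G x - F x‖ + (d + ε) ≤ M + ε := by
          rw [← add_assoc]
          exact add_le_add_left (le_max_left _ _) _
        have hMε2 : d + ε ≤ M + ε :=
          add_le_add_left (le_trans le_add_self (le_max_left _ _)) _
        refine ⟨⟨le_trans zero_le le_self_add, le_trans zero_le (le_trans hMε2 le_rfl) |>.trans le_rfl |>.trans le_rfl, ?_⟩, ?_, ?_, ?_⟩
        · exact le_trans h1 hMε2
        · exact le_trans h2 hMε1
        · exact le_trans h3 hMε2
        · exact le_trans h4 (le_trans (le_max_right _ _) le_self_add)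
  refine le_trans key ?_
  exact le_iSup₂_of_le x (by simpa [dist_zero_right] using hx) le_rfl

lemma dl_le {X : Type*} [PseudoEMetricSpace X] {c : X} {r : ℝ≥0∞} {A B : Set X} {C : ℝ≥0∞}
    (h1 : exs (A ∩ EMetric.closedBall c r) B ≤ C)
    (h2 : exs (B ∩ EMetric.closedBall c r) A ≤ C) : dl c r A B ≤ C := max_le h1 h2

/-- stationarity of composite functions. -/
theorem stmt18 {n m : ℕ}
    (φ ψ : EuclideanSpace ℝ (Fin m) → EReal)
    (hφbot : ∀ z, φ z ≠ ⊥) (hφtop : ∃ z, φ z ≠ ⊤) (hφlsc : LowerSemicontinuous φ)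
    (hψbot : ∀ z, ψ z ≠ ⊥) (hψtop : ∃ z, ψ z ≠ ⊤) (hψlsc : LowerSemicontinuous ψ)
    (F G : EuclideanSpace ℝ (Fin n) → EuclideanSpace ℝ (Fin m))
    (hF : ContDiff ℝ 1 F) (hG : ContDiff ℝ 1 G) (ρ : ℝ) (hρ : 0 ≤ ρ) :
    dl (0 : (EuclideanSpace ℝ (Fin n) × EuclideanSpace ℝ (Fin m) × EuclideanSpace ℝ (Fin m))
          × (EuclideanSpace ℝ (Fin m) × EuclideanSpace ℝ (Fin m) × EuclideanSpace ℝ (Fin n)))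
        (ENNReal.ofReal ρ)
        {q | q.2.1 = F q.1.1 - q.1.2.2 ∧ q.2.2.1 + q.1.2.1 ∈ limSubgrad φ q.1.2.2 ∧
             q.2.2.2 = (ContinuousLinearMap.adjoint (fderiv ℝ F q.1.1)) q.1.2.1}
        {q | q.2.1 = G q.1.1 - q.1.2.2 ∧ q.2.2.1 + q.1.2.1 ∈ limSubgrad ψ q.1.2.2 ∧
             q.2.2.2 = (ContinuousLinearMap.adjoint (fderiv ℝ G q.1.1)) q.1.2.1}
      ≤ ⨆ x ∈ Metric.closedBall (0 : EuclideanSpace ℝ (Fin n)) ρ,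
          max (ENNReal.ofReal ‖G x - F x‖ +
              dl (0 : EuclideanSpace ℝ (Fin m) × EuclideanSpace ℝ (Fin m))
                (ENNReal.ofReal (2 * ρ))
                {p | p.2 ∈ limSubgrad φ p.1} {p | p.2 ∈ limSubgrad ψ p.1})
            (ENNReal.ofReal (ρ * ‖ContinuousLinearMap.adjoint (fderiv ℝ G x)
                - ContinuousLinearMap.adjoint (fderiv ℝ F x)‖)) := by
  refine dl_le ?_ ?_
  · exact aux18 {p | p.2 ∈ limSubgrad φ p.1} {p | p.2 ∈ limSubgrad ψ p.1} F G
      (fun x => ContinuousLinearMap.adjoint (fderiv ℝ F x))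
      (fun x => ContinuousLinearMap.adjoint (fderiv ℝ G x)) ρ hρ
  · have h := aux18 {p | p.2 ∈ limSubgrad ψ p.1} {p | p.2 ∈ limSubgrad φ p.1} G F
      (fun x => ContinuousLinearMap.adjoint (fderiv ℝ G x))
      (fun x => ContinuousLinearMap.adjoint (fderiv ℝ F x)) ρ hρ
    refine h.trans (le_of_eq ?_)
    refine iSup_congr fun x => iSup_congr fun hx => ?_
    rw [dl_comm, norm_sub_rev, norm_sub_rev (ContinuousLinearMap.adjoint (fderiv ℝ F x))]
end
end
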